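/- arXiv:1612.08161 — 2 statements merged into one kernel-verified Lean document; each statement's English description precedes it below -/
import Mathlib

section
/- Let M be a real Hilbert space, M₂ ⊆ M a nonzero finite-dimensional subspace, M₁ = M₂^⊥ its orthogonal complement, and P₂ : M → M₂ the orthogonal projection. Let ϑ > 0 and let B : M → M be a bounded invertible linear operator such that B₀ := P₂ ∘ B restricted to M₂ is an invertible linear operator of M₂ with ‖B₀⁻¹‖ < ϑ. Let u₀ ∈ M₂ with ‖u₀‖ = 1, S = {m₁ + u₀ : m₁ ∈ M₁}, Q = {v ∈ M₂ : ‖v‖ ≤ ϑ} and ∂Q = {v ∈ M₂ : ‖v‖ = ϑ}. Then B(∂Q) ∩ S = ∅, and for every continuous map φ : B(Q) → M with φ(x) = x for all x ∈ B(∂Q), the image φ(B(Q)) intersects S, i.e., φ(B(Q)) ∩ S ≠ ∅. (In the terminology of the paper, B(∂Q) and S homotopically link; this is the main content of Lemma 2.3.) -/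
noncomputable section

section BrouwerAux

open Metric Set MeasureTheory

/-- Multilinear expansion of `det (1 + t • M)` in powers of `t`. -/
lemma det_one_add_smul_expand {n : ℕ} (t : ℝ) (M : Matrix (Fin n) (Fin n) ℝ) :
    (1 + t • M).det
      = ∑ s : Finset (Fin n), t ^ s.card *
          (Matrix.of (s.piecewise (M : Fin n → Fin n → ℝ) (1 : Matrix (Fin n) (Fin n) ℝ))).det := by
  have hdet : ∀ N : Fin n → Fin n → ℝ, (Matrix.of N).det
      = Matrix.detRowAlternating (R := ℝ) (n := Fin n) N := fun _ => rfl
  have h0 : (1 + t • M).det = (Matrix.of ((t • M : Fin n → Fin n → ℝ) + (1 : Matrix (Fin n) (Fin n) ℝ))).det := by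
    congr 1; ext i j
    simp only [Matrix.add_apply, Matrix.of_apply, Pi.add_apply]
    exact add_comm _ _
  rw [h0]; refine (hdet _).trans ?_
  have hexp := (Matrix.detRowAlternating (R := ℝ) (n := Fin n)).toMultilinearMap.map_add_univ
      (t • M : Fin n → Fin n → ℝ) (1 : Matrix (Fin n) (Fin n) ℝ)
  refine hexp.trans ?_
  refine Finset.sum_congr rfl fun s _ => ?_
  have hpw : (s.piecewise (t • M : Fin n → Fin n → ℝ) (1 : Matrix (Fin n) (Fin n) ℝ))
      = s.piecewise (fun i => t • (s.piecewise (M : Fin n → Fin n → ℝ) (1 : Matrix (Fin n) (Fin n) ℝ) i))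
          (s.piecewise (M : Fin n → Fin n → ℝ) (1 : Matrix (Fin n) (Fin n) ℝ)) := by
    funext i
    by_cases hi : i ∈ s <;> (funext j) <;> simp [Finset.piecewise, hi, Matrix.smul_apply]
  rw [hpw, MultilinearMap.map_piecewise_smul]
  rw [hdet]
  simp [Finset.prod_const, smul_eq_mul]

variable {E : Type*} [NormedAddCommGroup E] [InnerProductSpace ℝ E]

/-- Coefficient of the ray-sphere intersection: the nonnegative root parameter. -/
noncomputable def raySigma (y e : E) : ℝ :=
  (-(inner ℝ y e : ℝ) + Real.sqrt ((inner ℝ y e : ℝ)^2 + (1 - ‖y‖^2) * ‖e‖^2)) / ‖e‖^2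

lemma raySigma_norm_eq_one {y e : E} (he : e ≠ 0)
    (hΔnn : 0 ≤ (inner ℝ y e : ℝ)^2 + (1 - ‖y‖^2) * ‖e‖^2) :
    ‖y + raySigma y e • e‖ = 1 := by
  set b : ℝ := (inner ℝ y e : ℝ) with hb
  set a : ℝ := ‖e‖^2 with hae
  have ha : 0 < a := by rw [hae]; exact pow_pos (norm_pos_iff.mpr he) 2
  set Δ : ℝ := b^2 + (1 - ‖y‖^2) * a with hΔdef
  have hΔ : 0 ≤ Δ := by rw [hΔdef, hb, hae]; exact hΔnn
  set σ : ℝ := raySigma y e with hσ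
  have hσval : σ = (-b + Real.sqrt Δ) / a := rfl
  have hroot : a * σ^2 + 2*b*σ + (‖y‖^2 - 1) = 0 := by
    have hs : Real.sqrt Δ ^ 2 = Δ := Real.sq_sqrt hΔ
    rw [hσval]
    field_simp
    nlinarith [hs]
  have hnorm2 : ‖y + σ • e‖^2 = 1 := by
    have hsm : ‖σ • e‖^2 = σ^2 * a := by
      rw [norm_smul, mul_pow, Real.norm_eq_abs, sq_abs, hae]
    rw [norm_add_sq_real, real_inner_smul_right, hsm, ← hb]
    nlinarith [hroot]
  have h0 : (0:ℝ) ≤ ‖y + σ • e‖ := norm_nonneg _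
  nlinarith [hnorm2, h0]

lemma raySigma_eq_zero {y e : E} (hy : ‖y‖ = 1) (hb : 0 ≤ (inner ℝ y e : ℝ)) :
    raySigma y e = 0 := by
  unfold raySigma
  rw [hy]
  simp only [one_pow, sub_self, zero_mul, add_zero]
  rw [Real.sqrt_sq hb]
  simp

/-- If the base point is strictly inside and `y + e` is on the sphere, then `σ = 1`. -/
lemma raySigma_eq_one {y e : E} (he : e ≠ 0) (hy : ‖y‖ < 1) (h1 : ‖y + e‖ = 1) :
    raySigma y e = 1 := by
  set b : ℝ := (inner ℝ y e : ℝ) with hb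
  set a : ℝ := ‖e‖^2 with hae
  have ha : 0 < a := by rw [hae]; exact pow_pos (norm_pos_iff.mpr he) 2
  -- from ‖y+e‖ = 1 : ‖y‖² + 2b + a = 1
  have hq : ‖y‖^2 + 2*b + a = 1 := by
    have := norm_add_sq_real y e
    rw [h1] at this; nlinarith [this]
  have hΔ : b^2 + (1 - ‖y‖^2) * a = (a + b)^2 := by nlinarith
  have hab : 0 ≤ a + b := by nlinarith [norm_nonneg y, hq, ha, hy]
  unfold raySigma
  rw [← hb, ← hae, hΔ, Real.sqrt_sq hab]
  field_simp
  ring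

variable {n : ℕ}

local notation "Euc" => EuclideanSpace ℝ (Fin n)

set_option maxHeartbeats 2000000 in
/-- Milnor's lemma: there is no `C¹` sphere-valued map on a neighborhood of the closed
unit ball that is the identity on the unit sphere. -/
theorem no_smooth_retraction {U : Set (EuclideanSpace ℝ (Fin n))}
    {F : EuclideanSpace ℝ (Fin n) → EuclideanSpace ℝ (Fin n)}
    (hU : IsOpen U) (hDU : closedBall 0 1 ⊆ U) (hF : ContDiffOn ℝ 1 F U)
    (hFnorm : ∀ x ∈ U, ‖F x‖ = 1)
    (hFb : ∀ x ∈ sphere (0 : EuclideanSpace ℝ (Fin n)) 1, F x = x) : False := by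
  classical
  set D : Set Euc := closedBall 0 1 with hD
  have hDcomp : IsCompact D := isCompact_closedBall _ _
  have hDmeas : MeasurableSet D := measurableSet_closedBall
  have hDconv : Convex ℝ D := convex_closedBall _ _
  set idE : Euc →L[ℝ] Euc := ContinuousLinearMap.id ℝ Euc with hidE
  -- derivatives
  have hFdiff : ∀ x ∈ U, HasFDerivAt F (fderiv ℝ F x) x := fun x hx =>
    ((hF.differentiableOn one_ne_zero).differentiableAt (hU.mem_nhds hx)).hasFDerivAt
  set A : Euc → (Euc →L[ℝ] Euc) := fun x => fderiv ℝ F x - idE with hA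
  have hAcont : ContinuousOn A U :=
    (hF.continuousOn_fderiv_of_isOpen hU le_rfl).sub continuousOn_const
  obtain ⟨C₀, hC₀⟩ := hDcomp.exists_bound_of_continuousOn (hAcont.mono hDU)
  set C : ℝ := max C₀ 1 with hCdef
  have hC1 : (1:ℝ) ≤ C := le_max_right _ _
  have hCpos : (0:ℝ) < C := lt_of_lt_of_le one_pos hC1
  have hC : ∀ x ∈ D, ‖A x‖ ≤ C := fun x hx => (hC₀ x hx).trans (le_max_left _ _)
  -- the deformation and its derivative
  set G : ℝ → Euc → Euc := fun t x => x + t • (F x - x) with hG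
  have hGderiv : ∀ (t : ℝ), ∀ x ∈ U, HasFDerivAt (G t) (idE + t • A x) x := by
    intro t x hx
    exact (hasFDerivAt_id x).add (((hFdiff x hx).sub (hasFDerivAt_id x)).const_smul t)
  have hGcont : ∀ t : ℝ, ContinuousOn (G t) U := by
    intro t
    exact (continuousOn_id).add (continuousOn_const.fun_smul ((hF.continuousOn).sub continuousOn_id))
  -- invertibility of `idE + c • A x` for `‖c • A x‖ < 1`, nonvanishing and positivity of det
  have hunit : ∀ (c : ℝ) (x : Euc), ‖c • A x‖ < 1 →
      ∃ u : (Euc →L[ℝ] Euc)ˣ, (u : Euc →L[ℝ] Euc) = idE + c • A x := by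
    intro c x hc
    refine ⟨Units.oneSub (-(c • A x)) (by rwa [norm_neg]), ?_⟩
    rw [Units.val_oneSub, sub_neg_eq_add]
    rfl
  have hdet_ne : ∀ (c : ℝ) (x : Euc), ‖c • A x‖ < 1 → (idE + c • A x).det ≠ 0 := by
    intro c x hc
    obtain ⟨u, hu⟩ := hunit c x hc
    have hIsUnit : IsUnit ((idE + c • A x : Euc →L[ℝ] Euc) : Euc →ₗ[ℝ] Euc) := by
      refine isUnit_iff_exists.mpr
        ⟨(((u⁻¹ : (Euc →L[ℝ] Euc)ˣ) : Euc →L[ℝ] Euc) : Euc →ₗ[ℝ] Euc), ?_, ?_⟩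
      · refine LinearMap.ext fun v => ?_
        have h := ContinuousLinearMap.ext_iff.mp (u.mul_inv) v
        rw [hu] at h
        simpa using h
      · refine LinearMap.ext fun v => ?_
        have h := ContinuousLinearMap.ext_iff.mp (u.inv_mul) v
        rw [hu] at h
        simpa using h
    exact (LinearMap.isUnit_det _ hIsUnit).ne_zero
  have hdet_pos : ∀ (t : ℝ), 0 ≤ t → t * C < 1 → ∀ x ∈ D, 0 < (idE + t • A x).det := by
    intro t ht htC x hx
    set ψ : ℝ → ℝ := fun s => (idE + (s * t) • A x).det with hψ
    have hsmall : ∀ s ∈ Icc (0:ℝ) 1, ‖(s * t) • A x‖ < 1 := by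
      intro s hs
      calc ‖(s * t) • A x‖ = |s * t| * ‖A x‖ := by
            rw [norm_smul (s*t) (A x), Real.norm_eq_abs]
        _ ≤ t * C := by
            apply mul_le_mul _ (hC x hx) (norm_nonneg _) ht
            rw [abs_mul, abs_of_nonneg ht, abs_of_nonneg hs.1]
            nlinarith [hs.2]
        _ < 1 := htC
    have hψcont : ContinuousOn ψ (Icc 0 1) := by
      apply ContinuousLinearMap.continuous_det.comp_continuousOn
      exact continuousOn_const.add
        ((continuousOn_id.mul continuousOn_const).fun_smul continuousOn_const)
    have hψ0 : ψ 0 = 1 := by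
      simp only [hψ, zero_mul, zero_smul, add_zero]
      simp [hidE, ContinuousLinearMap.det]
    have hψne : ∀ s ∈ Icc (0:ℝ) 1, ψ s ≠ 0 := fun s hs => hdet_ne _ x (hsmall s hs)
    by_contra hnp
    push_neg at hnp
    have h10 : ψ 1 ≤ 0 := by
      have h1 : (1:ℝ) * t = t := one_mul t
      simpa [hψ, h1] using hnp
    have h0m : (0:ℝ) ∈ Icc (ψ 1) (ψ 0) := ⟨h10, by rw [hψ0]; exact zero_le_one⟩
    obtain ⟨s, hs, hψs⟩ := intermediate_value_Icc' (zero_le_one) hψcont h0m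
    exact hψne s hs hψs
  -- matrix representation
  set bE : Module.Basis (Fin n) ℝ Euc := (EuclideanSpace.basisFun (Fin n) ℝ).toBasis with hbE
  set Φ : (Euc →L[ℝ] Euc) →ₗ[ℝ] Matrix (Fin n) (Fin n) ℝ :=
    (LinearMap.toMatrix bE bE).toLinearMap ∘ₗ ContinuousLinearMap.coeLM ℝ with hΦ
  have hΦcont : Continuous Φ := Φ.continuous_of_finiteDimensional
  have hdet_mat : ∀ (t : ℝ) (x : Euc),
      (idE + t • A x).det = (1 + t • Φ (A x)).det := by
    intro t x
    have h1 : (1 + t • Φ (A x)) = LinearMap.toMatrix bE bE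
        ((idE + t • A x : Euc →L[ℝ] Euc) : Euc →ₗ[ℝ] Euc) := by
      have h2 : ((idE + t • A x : Euc →L[ℝ] Euc) : Euc →ₗ[ℝ] Euc)
          = LinearMap.id + t • ((A x : Euc →L[ℝ] Euc) : Euc →ₗ[ℝ] Euc) := by
        ext v; simp [hidE]
      rw [h2, map_add, _root_.map_smul, LinearMap.toMatrix_id]
      rfl
    rw [show (idE + t • A x).det
        = LinearMap.det ((idE + t • A x : Euc →L[ℝ] Euc) : Euc →ₗ[ℝ] Euc) from rfl,
      ← LinearMap.det_toMatrix bE, ← h1]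
  -- coefficient functions
  set g : Finset (Fin n) → Euc → ℝ := fun s x =>
    (Matrix.of (s.piecewise ((Φ (A x)) : Fin n → Fin n → ℝ)
      (1 : Matrix (Fin n) (Fin n) ℝ))).det with hg
  have hgcont : ∀ s, ContinuousOn (g s) D := by
    intro s
    have hM : ContinuousOn (fun x => Φ (A x)) D := hΦcont.comp_continuousOn (hAcont.mono hDU)
    have hpiece : ContinuousOn (fun x => Matrix.of (s.piecewise ((Φ (A x)) : Fin n → Fin n → ℝ)
        (1 : Matrix (Fin n) (Fin n) ℝ))) D := by
      apply continuousOn_pi.mpr; intro i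
      show ContinuousOn (fun x => s.piecewise (Φ (A x)) (1 : Matrix (Fin n) (Fin n) ℝ) i) D
      by_cases hi : i ∈ s
      · exact ((continuous_apply i).comp_continuousOn hM).congr
          fun x _ => Finset.piecewise_eq_of_mem _ _ _ hi
      · exact continuousOn_const.congr fun x _ => Finset.piecewise_eq_of_notMem _ _ _ hi
    exact (continuous_id.matrix_det).comp_continuousOn hpiece
  have hgint : ∀ s, IntegrableOn (g s) D := fun s => (hgcont s).integrableOn_compact hDcomp
  set cf : Finset (Fin n) → ℝ := fun s => ∫ x in D, g s x with hcf
  set P : Polynomial ℝ := ∑ s : Finset (Fin n), Polynomial.C (cf s) * Polynomial.X ^ s.card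
    with hP
  have hPeval : ∀ t : ℝ, P.eval t = ∫ x in D, (idE + t • A x).det := by
    intro t
    have h1 : ∫ x in D, (idE + t • A x).det
        = ∫ x in D, (∑ s : Finset (Fin n), t ^ s.card * g s x) := by
      refine setIntegral_congr_fun hDmeas fun x hx => ?_
      rw [hdet_mat, det_one_add_smul_expand]
    rw [h1, integral_finset_sum _ (fun s _ => ((hgint s).const_mul _))]
    simp only [hP, Polynomial.eval_finset_sum, Polynomial.eval_mul, Polynomial.eval_C,
      Polynomial.eval_pow, Polynomial.eval_X]
    refine Finset.sum_congr rfl fun s _ => ?_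
    rw [MeasureTheory.integral_const_mul]
    ring
  -- eval at `1` vanishes
  have heval1 : P.eval 1 = 0 := by
    rw [hPeval 1]
    have hzero : ∀ x ∈ D, (idE + (1:ℝ) • A x).det = 0 := by
      intro x hx
      have hxU := hDU hx
      have hid : idE + (1:ℝ) • A x = fderiv ℝ F x := by
        ext v; simp [hA, hidE]
      rw [hid]
      by_contra h0
      have hdetLM : LinearMap.det ((fderiv ℝ F x : Euc →L[ℝ] Euc) : Euc →ₗ[ℝ] Euc) ≠ 0 := h0
      have hsurj : Function.Surjective (fderiv ℝ F x) := by
        intro y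
        obtain ⟨v, hv⟩ := (LinearMap.equivOfDetNeZero _ hdetLM).surjective y
        refine ⟨v, ?_⟩
        rw [← hv]
        simp [LinearEquiv.coe_ofIsUnitDet]
      obtain ⟨v, hv⟩ := hsurj (F x)
      have hconst : (fun y => (inner ℝ (F y) (F y) : ℝ)) =ᶠ[nhds x] (fun _ => (1:ℝ)) := by
        filter_upwards [hU.mem_nhds hxU] with y hy
        rw [real_inner_self_eq_norm_sq, hFnorm y hy, one_pow]
      have hD1 : HasFDerivAt (fun y => (inner ℝ (F y) (F y) : ℝ)) 0 x :=
        HasFDerivAt.congr_of_eventuallyEq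
          (hasFDerivAt_const (𝕜 := ℝ) (1:ℝ) x : HasFDerivAt (fun _ : Euc => (1:ℝ)) 0 x) hconst
      have hD2 := (hFdiff x hxU).inner ℝ (hFdiff x hxU)
      have hzero' := hD2.unique hD1
      have h2 : (inner ℝ (F x) (fderiv ℝ F x v) : ℝ) + (inner ℝ (fderiv ℝ F x v) (F x) : ℝ) = 0 := by
        have := congrArg (fun (L : Euc →L[ℝ] ℝ) => L v) hzero'
        simpa [fderivInnerCLM] using this
      rw [hv, real_inner_comm] at h2
      have h3 : (inner ℝ (F x) (F x) : ℝ) = 0 := by linarith [h2]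
      rw [real_inner_self_eq_norm_sq, hFnorm x hxU] at h3
      norm_num at h3
    have : ∫ x in D, (idE + (1:ℝ) • A x).det = ∫ x in D, (0:ℝ) :=
      setIntegral_congr_fun hDmeas fun x hx => hzero x hx
    rw [this, integral_zero]
  -- eval on a small interval equals the volume
  set τ : ℝ := (2*C)⁻¹ with hτ
  have hτpos : 0 < τ := by positivity
  have hkey : ∀ t ∈ Ioc (0:ℝ) τ, P.eval t = (volume D).toReal := by
    rintro t ⟨ht0, htτ⟩
    have htC : t * C < 1 := by
      have h2C : (0:ℝ) < 2*C := by linarith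
      have h1 : t * (2*C) ≤ 1 := by
        have h3 := mul_le_mul_of_nonneg_right htτ (le_of_lt h2C)
        rwa [inv_mul_cancel₀ (ne_of_gt h2C)] at h3
      nlinarith
    have htlt1 : t < 1 := by
      have h2 : t * C < 1 := htC
      nlinarith
    have hsmul_small : ∀ x ∈ D, ‖t • A x‖ < 1 := by
      intro x hx
      calc ‖t • A x‖ = |t| * ‖A x‖ := by rw [norm_smul t (A x), Real.norm_eq_abs]
        _ ≤ t * C := by
            apply mul_le_mul (le_of_eq (abs_of_nonneg ht0.le)) (hC x hx) (norm_nonneg _) ht0.le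
        _ < 1 := htC
    -- G t maps D to D
    have hmaps : MapsTo (G t) D D := by
      intro x hx
      have hx1 : ‖x‖ ≤ 1 := mem_closedBall_zero_iff.mp hx
      have hrw : G t x = (1-t) • x + t • F x := by
        simp only [hG]; module
      rw [hD, mem_closedBall_zero_iff, hrw]
      calc ‖(1-t) • x + t • F x‖ ≤ ‖(1-t) • x‖ + ‖t • F x‖ := norm_add_le _ _
        _ = (1-t) * ‖x‖ + t * ‖F x‖ := by
            rw [norm_smul, norm_smul, Real.norm_eq_abs, Real.norm_eq_abs,
              abs_of_nonneg (by linarith : (0:ℝ) ≤ 1 - t), abs_of_nonneg ht0.le]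
        _ ≤ (1-t) * 1 + t * 1 := by
            have := hFnorm x (hDU hx)
            rw [this]
            have : (0:ℝ) ≤ 1 - t := by linarith
            nlinarith
        _ = 1 := by ring
    -- injectivity
    have hinj : InjOn (G t) D := by
      intro x hx y hy hxy
      have hlip := Convex.norm_image_sub_le_of_norm_hasFDerivWithin_le
        (f := fun z => F z - z) (f' := A)
        (fun z hz => ((hFdiff z (hDU hz)).sub (hasFDerivAt_id z)).hasFDerivWithinAt)
        (fun z hz => hC z hz) hDconv hy hx
      have heq : x - y = t • ((F y - y) - (F x - x)) := by
        have h := hxy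
        simp only [hG] at h
        have h' : x + t • (F x - x) - (y + t • (F y - y)) = 0 := sub_eq_zero.mpr h
        have h2 : (x - y) - t • ((F y - y) - (F x - x))
            = x + t • (F x - x) - (y + t • (F y - y)) := by module
        have h3 : (x - y) - t • ((F y - y) - (F x - x)) = 0 := by rw [h2]; exact h'
        exact sub_eq_zero.mp h3
      have hnorm : ‖x - y‖ ≤ t * C * ‖x - y‖ := by
        calc ‖x - y‖ = ‖t • ((F y - y) - (F x - x))‖ := by rw [← heq]
          _ = |t| * ‖(F y - y) - (F x - x)‖ := by
              rw [norm_smul t ((F y - y) - (F x - x)), Real.norm_eq_abs]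
          _ = t * ‖(F y - y) - (F x - x)‖ := by rw [abs_of_nonneg ht0.le]
          _ ≤ t * (C * ‖x - y‖) := by
              apply mul_le_mul_of_nonneg_left _ ht0.le
              calc ‖(F y - y) - (F x - x)‖ = ‖(F x - x) - (F y - y)‖ := norm_sub_rev _ _
                _ ≤ C * ‖x - y‖ := hlip
          _ = t * C * ‖x - y‖ := by ring
      have : (1 - t * C) * ‖x - y‖ ≤ 0 := by nlinarith
      have hxynorm : ‖x - y‖ ≤ 0 := by nlinarith
      have := norm_nonneg (x - y)
      have : ‖x - y‖ = 0 := le_antisymm hxynorm this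
      exact sub_eq_zero.mp (norm_eq_zero.mp this)
    -- image is the ball
    have himage : G t '' D = D := by
      have hsub : G t '' D ⊆ D := hmaps.image_subset
      have hK : IsCompact (G t '' D) := hDcomp.image_of_continuousOn ((hGcont t).mono hDU)
      have hopen : ∀ y ∈ G t '' D ∩ ball (0:Euc) 1, G t '' D ∈ nhds y := by
        rintro y ⟨⟨x, hxD, rfl⟩, hyball⟩
        have hx1 : ‖x‖ ≤ 1 := mem_closedBall_zero_iff.mp hxD
        rcases lt_or_eq_of_le hx1 with hxlt | hxeq
        · -- interior point: use IFT openness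
          have hxU : x ∈ U := hDU hxD
          have hstrict : HasStrictFDerivAt (G t) (idE + t • A x) x := by
            have hFs : HasStrictFDerivAt F (fderiv ℝ F x) x :=
              (hF.contDiffAt (hU.mem_nhds hxU)).hasStrictFDerivAt one_ne_zero
            exact (hasStrictFDerivAt_id x).add
              ((hFs.sub (hasStrictFDerivAt_id x)).const_smul t)
          have hdetne : (idE + t • A x).det ≠ 0 := (hdet_pos t ht0.le htC x hxD).ne'
          set eL := LinearMap.equivOfDetNeZero _ hdetne with heL
          set eC : Euc ≃L[ℝ] Euc := eL.toContinuousLinearEquiv with heC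
          have hcoe : (eC : Euc →L[ℝ] Euc) = idE + t • A x := by
            refine ContinuousLinearMap.ext fun v => ?_
            have h1 : ((eC : Euc →L[ℝ] Euc)) v = eL v := rfl
            rw [h1, heL]
            exact LinearEquiv.ofIsUnitDet_apply _ v
          have hstrict' : HasStrictFDerivAt (G t) ((eC : Euc →L[ℝ] Euc) : Euc →L[ℝ] Euc) x := by
            rw [hcoe]; exact hstrict
          have hmapnh : Filter.map (G t) (nhds x) = nhds (G t x) :=
            hstrict'.map_nhds_eq_of_equiv
          rw [← hmapnh]
          have hball_mem : ball (0:Euc) 1 ∈ nhds x :=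
            isOpen_ball.mem_nhds (mem_ball_zero_iff.mpr hxlt)
          exact Filter.mem_of_superset (Filter.image_mem_map hball_mem)
            (image_mono ball_subset_closedBall)
        · -- boundary point: `G t x = x`, contradiction with `y ∈ ball`
          exfalso
          have hxs : x ∈ sphere (0:Euc) 1 := by
            rw [mem_sphere_zero_iff_norm]; exact hxeq
          have hGx : G t x = x := by
            simp only [hG]; rw [hFb x hxs]; simp
          rw [hGx, mem_ball_zero_iff] at hyball
          rw [hxeq] at hyball
          exact lt_irrefl _ hyball
      -- clopen argument on the connected open ball
      have hball : ball (0:Euc) 1 ⊆ G t '' D := by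
        intro z hz
        by_contra hznot
        have hpre : IsPreconnected (ball (0:Euc) 1) := (convex_ball (0:Euc) 1).isPreconnected
        have hG0 : G t 0 ∈ G t '' D ∩ ball (0:Euc) 1 := by
          constructor
          · exact mem_image_of_mem _ (mem_closedBall_self zero_le_one)
          · rw [mem_ball_zero_iff]
            have h0U : (0:Euc) ∈ U := hDU (mem_closedBall_self zero_le_one)
            have hG00 : G t 0 = t • F 0 := by simp [hG]
            rw [hG00, norm_smul, Real.norm_eq_abs, abs_of_nonneg ht0.le, hFnorm 0 h0U, mul_one]
            exact htlt1
        obtain ⟨w, hwball, hwint, hwc⟩ := hpre (interior (G t '' D)) ((G t '' D)ᶜ)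
          isOpen_interior hK.isClosed.isOpen_compl
          (by
            intro y hy
            by_cases hyK : y ∈ G t '' D
            · exact Or.inl (mem_interior_iff_mem_nhds.mpr (hopen y ⟨hyK, hy⟩))
            · exact Or.inr hyK)
          ⟨G t 0, hG0.2, mem_interior_iff_mem_nhds.mpr (hopen _ hG0)⟩
          ⟨z, hz, hznot⟩
        exact hwc (interior_subset hwint)
      have hDsub : D ⊆ G t '' D := by
        have h1 : closure (ball (0:Euc) 1) ⊆ G t '' D := closure_minimal hball hK.isClosed
        rw [closure_ball (0:Euc) one_ne_zero] at h1
        exact h1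
      exact hsub.antisymm hDsub
    -- change of variables
    have hfd : ∀ x ∈ D, HasFDerivWithinAt (G t) (idE + t • A x) D x := fun x hx =>
      (hGderiv t x (hDU hx)).hasFDerivWithinAt
    have hcov := lintegral_abs_det_fderiv_eq_addHaar_image volume hDmeas hfd hinj
    rw [himage] at hcov
    have hcont_int : ContinuousOn (fun x => (idE + t • A x).det) D :=
      ContinuousLinearMap.continuous_det.comp_continuousOn
        (continuousOn_const.add ((hAcont.mono hDU).const_smul t))
    have hint : IntegrableOn (fun x => (idE + t • A x).det) D :=
      hcont_int.integrableOn_compact hDcomp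
    have habs : ∫⁻ x in D, ENNReal.ofReal |(idE + t • A x).det| ∂volume
        = ∫⁻ x in D, ENNReal.ofReal ((idE + t • A x).det) ∂volume := by
      refine setLIntegral_congr_fun hDmeas (fun x hx => ?_)
      rw [abs_of_pos (hdet_pos t ht0.le htC x hx)]
    have hpos_ae : 0 ≤ᵐ[volume.restrict D] fun x => (idE + t • A x).det :=
      (ae_restrict_iff' hDmeas).mpr
        (Filter.Eventually.of_forall fun x hx => (hdet_pos t ht0.le htC x hx).le)
    have hOfReal : ENNReal.ofReal (∫ x in D, (idE + t • A x).det) = volume D := by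
      rw [ofReal_integral_eq_lintegral_ofReal hint hpos_ae, ← habs]
      exact hcov
    have hIntNonneg : 0 ≤ ∫ x in D, (idE + t • A x).det :=
      setIntegral_nonneg hDmeas fun x hx => (hdet_pos t ht0.le htC x hx).le
    rw [hPeval t, ← ENNReal.toReal_ofReal hIntNonneg, hOfReal]
  -- conclude via the polynomial identity
  have hvol_pos : 0 < (volume D).toReal :=
    ENNReal.toReal_pos (measure_closedBall_pos volume _ one_pos).ne' measure_closedBall_lt_top.ne
  have hroots : {x : ℝ | (P - Polynomial.C ((volume D).toReal)).IsRoot x}.Infinite := by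
    have hIoc : (Ioc (0:ℝ) τ).Infinite := Set.infinite_coe_iff.mp (Set.Ioc.infinite hτpos)
    refine hIoc.mono ?_
    intro t ht
    simp only [mem_setOf_eq, Polynomial.IsRoot.def, Polynomial.eval_sub, Polynomial.eval_C]
    rw [hkey t ht]; ring
  have hPC : P = Polynomial.C ((volume D).toReal) :=
    sub_eq_zero.mp (Polynomial.eq_zero_of_infinite_isRoot _ hroots)
  rw [hPC, Polynomial.eval_C] at heval1
  exact absurd heval1 (ne_of_gt hvol_pos)

/-- Brouwer fixed point theorem, smooth case. -/
theorem smooth_brouwer {g : EuclideanSpace ℝ (Fin n) → EuclideanSpace ℝ (Fin n)}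
    (hg : ContDiff ℝ 1 g)
    (hmaps : MapsTo g (closedBall 0 1) (closedBall 0 1)) :
    ∃ x ∈ closedBall (0 : EuclideanSpace ℝ (Fin n)) 1, g x = x := by
  by_contra hfix
  push_neg at hfix
  set d : Euc → Euc := fun x => x - g x with hd
  have hdcont : Continuous d := continuous_id.sub hg.continuous
  set bf : Euc → ℝ := fun x => (inner ℝ x (d x) : ℝ) with hbf
  have hbcont : Continuous bf := continuous_id.inner hdcont
  set Δ : Euc → ℝ := fun x => bf x^2 + (1 - ‖x‖^2) * ‖d x‖^2 with hΔdef
  have hΔcont : Continuous Δ :=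
    ((hbcont.pow 2).add ((continuous_const.sub (continuous_norm.pow 2)).mul
      ((hdcont.norm).pow 2)))
  set U : Set Euc := {x | 0 < Δ x ∧ d x ≠ 0} with hUdef
  have hUopen : IsOpen U := by
    refine (isOpen_lt continuous_const hΔcont).and ?_
    have : IsClosed {x : Euc | d x = 0} := isClosed_eq hdcont continuous_const
    exact this.isOpen_compl
  have hdne : ∀ x ∈ closedBall (0:Euc) 1, d x ≠ 0 := by
    intro x hx
    exact sub_ne_zero.mpr fun h => hfix x hx h.symm
  have hbpos : ∀ x : Euc, ‖x‖ = 1 → 0 < bf x := by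
    intro x hx1
    have hxD : x ∈ closedBall (0:Euc) 1 := mem_closedBall_zero_iff.mpr hx1.le
    have hgx1 : ‖g x‖ ≤ 1 := mem_closedBall_zero_iff.mp (hmaps hxD)
    have hip : (inner ℝ x (g x) : ℝ) ≤ 1 := by
      calc (inner ℝ x (g x) : ℝ) ≤ ‖x‖ * ‖g x‖ := real_inner_le_norm _ _
        _ ≤ 1 := by rw [hx1, one_mul]; exact hgx1
    have hbeq : bf x = 1 - (inner ℝ x (g x) : ℝ) := by
      simp only [hbf, hd]
      rw [inner_sub_right, real_inner_self_eq_norm_sq, hx1]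
      norm_num
    rcases lt_or_eq_of_le hip with hlt | heq1
    · rw [hbeq]; linarith
    · exfalso
      have hexp : ‖g x - x‖^2 = ‖g x‖^2 - 2*(inner ℝ x (g x) : ℝ) + ‖x‖^2 := by
        rw [norm_sub_sq_real, real_inner_comm]
      have hle : ‖g x - x‖^2 ≤ 0 := by
        rw [hexp]
        nlinarith [norm_nonneg (g x), hgx1, hx1, heq1]
      have hzz : g x - x = 0 := by
        have := sq_nonneg ‖g x - x‖
        have h0 : ‖g x - x‖^2 = 0 := le_antisymm hle this
        have := pow_eq_zero_iff (n := 2) (by norm_num) |>.mp h0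
        exact norm_eq_zero.mp this
      exact hfix x hxD (sub_eq_zero.mp hzz)
  have hDU : closedBall (0:Euc) 1 ⊆ U := by
    intro x hx
    have hx1 : ‖x‖ ≤ 1 := mem_closedBall_zero_iff.mp hx
    refine ⟨?_, hdne x hx⟩
    rcases lt_or_eq_of_le hx1 with h | h
    · have hdpos : 0 < ‖d x‖ := norm_pos_iff.mpr (hdne x hx)
      have h2 : 0 < (1 - ‖x‖^2) * ‖d x‖^2 := by
        apply mul_pos
        · nlinarith [norm_nonneg x]
        · positivity
      simp only [hΔdef]
      nlinarith [sq_nonneg (bf x)]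
    · have hb := hbpos x h
      simp only [hΔdef]
      have h2 : ‖x‖^2 = 1 := by rw [h]; norm_num
      nlinarith [hb]
  -- the retraction
  set F : Euc → Euc := fun x => x + ((-bf x + Real.sqrt (Δ x)) / ‖d x‖^2) • d x with hFdef
  have hFsig : ∀ x : Euc, F x = x + raySigma x (d x) • d x := by
    intro x
    simp only [hFdef, raySigma, hbf, hΔdef]
  have hFcd : ContDiffOn ℝ 1 F U := by
    have hdcd : ContDiff ℝ 1 d := contDiff_id.sub hg
    have hbcd : ContDiff ℝ 1 bf := ContDiff.inner ℝ contDiff_id hdcd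
    have hn2 : ContDiff ℝ 1 (fun x : Euc => ‖d x‖^2) := by
      have h0 : ContDiff ℝ 1 (fun x : Euc => (inner ℝ (d x) (d x) : ℝ)) :=
        ContDiff.inner ℝ hdcd hdcd
      have heq : (fun x : Euc => ‖d x‖^2) = fun x => (inner ℝ (d x) (d x) : ℝ) := by
        funext x; rw [real_inner_self_eq_norm_sq]
      rw [heq]; exact h0
    have hx2 : ContDiff ℝ 1 (fun x : Euc => ‖x‖^2) := by
      have h0 : ContDiff ℝ 1 (fun x : Euc => (inner ℝ x x : ℝ)) :=
        ContDiff.inner ℝ contDiff_id contDiff_id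
      have heq : (fun x : Euc => ‖x‖^2) = fun x : Euc => (inner ℝ x x : ℝ) := by
        funext x; rw [real_inner_self_eq_norm_sq]
      rw [heq]; exact h0
    have hΔcd : ContDiffOn ℝ 1 Δ U := by
      apply ContDiffOn.add (hbcd.pow 2).contDiffOn
      exact ((contDiff_const.sub hx2).mul hn2).contDiffOn
    have hsq : ContDiffOn ℝ 1 (fun x => Real.sqrt (Δ x)) U :=
      hΔcd.sqrt fun x hx => hx.1.ne'
    have hquot : ContDiffOn ℝ 1 (fun x => (-bf x + Real.sqrt (Δ x)) / ‖d x‖^2) U := by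
      apply ContDiffOn.div ((hbcd.neg.contDiffOn).add hsq) hn2.contDiffOn
      intro x hx
      have : 0 < ‖d x‖ := norm_pos_iff.mpr hx.2
      positivity
    exact contDiffOn_id.add (hquot.smul hdcd.contDiffOn)
  have hFnorm : ∀ x ∈ U, ‖F x‖ = 1 := by
    intro x hx
    rw [hFsig]
    exact raySigma_norm_eq_one hx.2 (le_of_lt hx.1)
  have hFb : ∀ x ∈ sphere (0:Euc) 1, F x = x := by
    intro x hxs
    have hx1 : ‖x‖ = 1 := mem_sphere_zero_iff_norm.mp hxs
    rw [hFsig, raySigma_eq_zero hx1 (hbpos x hx1).le, zero_smul, add_zero]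
  exact no_smooth_retraction hUopen hDU hFcd hFnorm hFb

/-- Smooth uniform approximation on a compact set. -/
theorem smooth_approx {u : EuclideanSpace ℝ (Fin n) → EuclideanSpace ℝ (Fin n)}
    (hu : Continuous u) {K : Set (EuclideanSpace ℝ (Fin n))} (hK : IsCompact K)
    {ε : ℝ} (hε : 0 < ε) :
    ∃ h : EuclideanSpace ℝ (Fin n) → EuclideanSpace ℝ (Fin n),
      ContDiff ℝ 1 h ∧ ∀ x ∈ K, ‖h x - u x‖ ≤ ε := by
  set K1 := cthickening 1 K with hK1def
  have hK1 : IsCompact K1 := hK.cthickening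
  have huc := hK1.uniformContinuousOn_of_continuous hu.continuousOn
  rw [Metric.uniformContinuousOn_iff] at huc
  obtain ⟨δ, hδpos, hδ⟩ := huc ε hε
  set r : ℝ := min (δ/2) 1 with hrdef
  have hrpos : 0 < r := lt_min (by linarith) one_pos
  set φ : ContDiffBump (0 : Euc) := ⟨r/2, r, by positivity, by linarith⟩ with hφ
  set h : Euc → Euc :=
    convolution (φ.normed volume) u (ContinuousLinearMap.lsmul ℝ ℝ : ℝ →L[ℝ] Euc →L[ℝ] Euc) volume with hh
  refine ⟨h, ?_, ?_⟩
  · exact HasCompactSupport.contDiff_convolution_left _ φ.hasCompactSupport_normed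
      (φ.contDiff_normed (n := 1)) hu.locallyIntegrable
  · intro x₀ hx₀
    have hx₀1 : x₀ ∈ K1 := self_subset_cthickening K hx₀
    have hballK : ∀ x ∈ ball x₀ φ.rOut, dist (u x) (u x₀) ≤ ε := by
      intro x hx
      have hdist : dist x x₀ < r := mem_ball.mp hx
      have hx1 : x ∈ K1 := mem_cthickening_of_dist_le x x₀ 1 K hx₀
        (le_trans hdist.le (min_le_right _ _))
      have : dist x x₀ < δ := lt_of_lt_of_le hdist (le_trans (min_le_left _ _) (by linarith))
      exact (hδ x hx1 x₀ hx₀1 this).le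
    have := ContDiffBump.dist_normed_convolution_le (φ := φ) (μ := volume)
      hu.aestronglyMeasurable hballK
    rw [← dist_eq_norm]
    exact this

/-- Brouwer fixed point theorem for the closed unit ball. -/
theorem brouwer_closedBall {g : EuclideanSpace ℝ (Fin n) → EuclideanSpace ℝ (Fin n)}
    (hg : ContinuousOn g (closedBall 0 1))
    (hmaps : MapsTo g (closedBall 0 1) (closedBall 0 1)) :
    ∃ x ∈ closedBall (0 : EuclideanSpace ℝ (Fin n)) 1, g x = x := by
  set proj : Euc → Euc := fun x => (max 1 ‖x‖)⁻¹ • x with hproj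
  have hmaxpos : ∀ x : Euc, 0 < max 1 ‖x‖ := fun x =>
    lt_of_lt_of_le one_pos (le_max_left _ _)
  have hprojcont : Continuous proj := by
    exact ((continuous_const.max continuous_norm).inv₀
      (fun x => (hmaxpos x).ne')).smul continuous_id
  have hprojmem : ∀ x : Euc, proj x ∈ closedBall (0:Euc) 1 := by
    intro x
    rw [mem_closedBall_zero_iff, hproj]
    rw [norm_smul, Real.norm_eq_abs, abs_of_pos (inv_pos.mpr (hmaxpos x)), inv_mul_eq_div]
    rw [div_le_one (hmaxpos x)]
    exact le_max_right _ _
  have hprojid : ∀ x ∈ closedBall (0:Euc) 1, proj x = x := by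
    intro x hx
    have h1 : max 1 ‖x‖ = 1 := max_eq_left (mem_closedBall_zero_iff.mp hx)
    simp [hproj, h1]
  set g' : Euc → Euc := fun x => g (proj x) with hg'
  have hg'cont : Continuous g' := hg.comp_continuous hprojcont hprojmem
  have hg'mem : ∀ x : Euc, g' x ∈ closedBall (0:Euc) 1 := fun x => hmaps (hprojmem x)
  by_contra hfix
  push_neg at hfix
  obtain ⟨x₀, hx₀D, hmin⟩ := (isCompact_closedBall (0:Euc) 1).exists_isMinOn
    ⟨0, mem_closedBall_self zero_le_one⟩ ((hg'cont.sub continuous_id).norm.continuousOn)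
  set δ : ℝ := ‖g' x₀ - x₀‖ with hδdef
  have hδpos : 0 < δ := by
    have hne : g' x₀ ≠ x₀ := by
      simp only [hg', hprojid x₀ hx₀D]
      exact fun h => hfix x₀ hx₀D h
    exact norm_pos_iff.mpr (sub_ne_zero.mpr hne)
  obtain ⟨h, hhsmooth, hhapprox⟩ := smooth_approx hg'cont
    (isCompact_closedBall (0:Euc) 1) (ε := δ/4) (by positivity)
  set cc : ℝ := (1 + δ/4)⁻¹ with hcc
  have hccpos : 0 < cc := by rw [hcc]; positivity
  set h' : Euc → Euc := fun x => cc • h x with hh'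
  have hh'smooth : ContDiff ℝ 1 h' := hhsmooth.const_smul cc
  have hh'maps : MapsTo h' (closedBall (0:Euc) 1) (closedBall (0:Euc) 1) := by
    intro x hx
    have h1 : ‖h x‖ ≤ 1 + δ/4 := by
      calc ‖h x‖ = ‖(h x - g' x) + g' x‖ := by congr 1; abel
        _ ≤ ‖h x - g' x‖ + ‖g' x‖ := norm_add_le _ _
        _ ≤ δ/4 + 1 := add_le_add (hhapprox x hx) (mem_closedBall_zero_iff.mp (hg'mem x))
        _ = 1 + δ/4 := by ring
    rw [mem_closedBall_zero_iff, hh']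
    rw [norm_smul, Real.norm_eq_abs, abs_of_pos hccpos]
    calc cc * ‖h x‖ ≤ cc * (1 + δ/4) :=
          mul_le_mul_of_nonneg_left h1 hccpos.le
      _ = 1 := by rw [hcc]; field_simp
  obtain ⟨xs, hxsD, hxsfix⟩ := smooth_brouwer hh'smooth hh'maps
  have hb1 : δ ≤ ‖g' xs - xs‖ := hmin hxsD
  have h4 : ‖g' xs - h xs‖ ≤ δ/4 := by
    rw [norm_sub_rev]; exact hhapprox xs hxsD
  have h5 : ‖h xs - h' xs‖ ≤ δ/4 := by
    have heq : h xs - h' xs = (1 - cc) • h xs := by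
      rw [hh', sub_smul, one_smul]
    rw [heq, norm_smul, Real.norm_eq_abs]
    have h1cc : 0 ≤ 1 - cc := by
      rw [hcc]
      have : (1 + δ/4)⁻¹ ≤ 1 := by
        rw [inv_le_one_iff₀]; right; linarith
      linarith
    rw [abs_of_nonneg h1cc]
    have h1 : ‖h xs‖ ≤ 1 + δ/4 := by
      calc ‖h xs‖ = ‖(h xs - g' xs) + g' xs‖ := by congr 1; abel
        _ ≤ ‖h xs - g' xs‖ + ‖g' xs‖ := norm_add_le _ _
        _ ≤ δ/4 + 1 := add_le_add (hhapprox xs hxsD) (mem_closedBall_zero_iff.mp (hg'mem xs))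
        _ = 1 + δ/4 := by ring
    have h2 : 1 - cc = (δ/4) * cc := by
      rw [hcc]; field_simp; ring
    rw [h2]
    calc δ/4 * cc * ‖h xs‖ ≤ δ/4 * cc * (1 + δ/4) := by
          apply mul_le_mul_of_nonneg_left h1; positivity
      _ = δ/4 := by rw [hcc]; field_simp
  have h3 : ‖g' xs - xs‖ ≤ ‖g' xs - h xs‖ + ‖h xs - h' xs‖ := by
    calc ‖g' xs - xs‖ = ‖g' xs - h' xs‖ := by rw [hxsfix]
      _ ≤ ‖g' xs - h xs‖ + ‖h xs - h' xs‖ := norm_sub_le_norm_sub_add_norm_sub _ _ _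
  linarith

/-- A continuous map of the closed unit ball fixing the unit sphere hits every
interior point. -/
theorem retraction_surj {f : EuclideanSpace ℝ (Fin n) → EuclideanSpace ℝ (Fin n)}
    (hf : ContinuousOn f (closedBall 0 1))
    (hfb : ∀ x ∈ sphere (0 : EuclideanSpace ℝ (Fin n)) 1, f x = x)
    {y : EuclideanSpace ℝ (Fin n)} (hy : ‖y‖ < 1) :
    ∃ x ∈ closedBall (0 : EuclideanSpace ℝ (Fin n)) 1, f x = y := by
  by_contra hne
  push_neg at hne
  set e : Euc → Euc := fun x => f x - y with hedef
  have hene : ∀ x ∈ closedBall (0:Euc) 1, e x ≠ 0 := fun x hx =>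
    sub_ne_zero.mpr (hne x hx)
  have hecont : ContinuousOn e (closedBall (0:Euc) 1) := hf.sub continuousOn_const
  set r : Euc → Euc := fun x => y + raySigma y (e x) • e x with hrdef
  have hrcont : ContinuousOn r (closedBall (0:Euc) 1) := by
    have hsig : ContinuousOn (fun x => raySigma y (e x)) (closedBall (0:Euc) 1) := by
      have hin : ContinuousOn (fun x => (inner ℝ y (e x) : ℝ)) (closedBall (0:Euc) 1) :=
        continuousOn_const.inner hecont
      have hnrm : ContinuousOn (fun x => ‖e x‖^2) (closedBall (0:Euc) 1) :=
        (hecont.norm).pow 2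
      have hs : ContinuousOn (fun x =>
          Real.sqrt ((inner ℝ y (e x) : ℝ)^2 + (1 - ‖y‖^2) * ‖e x‖^2)) (closedBall (0:Euc) 1) :=
        Real.continuous_sqrt.comp_continuousOn ((hin.pow 2).add (continuousOn_const.mul hnrm))
      exact ((hin.neg.add hs).div hnrm
        (fun x hx => by
          have : 0 < ‖e x‖ := norm_pos_iff.mpr (hene x hx)
          positivity))
    exact continuousOn_const.add (hsig.fun_smul hecont)
  have hrnorm : ∀ x ∈ closedBall (0:Euc) 1, ‖r x‖ = 1 := by
    intro x hx
    apply raySigma_norm_eq_one (hene x hx)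
    have h1 : (0:ℝ) ≤ 1 - ‖y‖^2 := by nlinarith [norm_nonneg y]
    positivity
  have hrb : ∀ x ∈ sphere (0:Euc) 1, r x = x := by
    intro x hxs
    have hxD : x ∈ closedBall (0:Euc) 1 := sphere_subset_closedBall hxs
    have hex : e x = x - y := by rw [hedef]; simp only []; rw [hfb x hxs]
    have hσ : raySigma y (e x) = 1 := by
      apply raySigma_eq_one (hene x hxD) hy
      rw [hex]
      have : y + (x - y) = x := by abel
      rw [this]
      exact mem_sphere_zero_iff_norm.mp hxs
    rw [hrdef]
    simp only []
    rw [hσ, one_smul, hex]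
    abel
  have hgnegmaps : MapsTo (fun x => -(r x)) (closedBall (0:Euc) 1) (closedBall (0:Euc) 1) := by
    intro x hx
    rw [mem_closedBall_zero_iff, norm_neg, hrnorm x hx]
  obtain ⟨x, hxD, hxfix⟩ := brouwer_closedBall hrcont.neg hgnegmaps
  have hxfix' : -(r x) = x := hxfix
  have hx1 : ‖x‖ = 1 := by rw [← hxfix', norm_neg]; exact hrnorm x hxD
  have hrx : r x = x := hrb x (mem_sphere_zero_iff_norm.mpr hx1)
  have hneg : -x = x := by rw [hrx] at hxfix'; exact hxfix'
  have hx0 : x = 0 := by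
    have h2 : (2:ℝ) • x = 0 := by
      rw [two_smul]
      nth_rewrite 1 [← hneg]
      abel
    rcases smul_eq_zero.mp h2 with h | h
    · norm_num at h
    · exact h
  rw [hx0] at hx1
  simp at hx1

end BrouwerAux

open Metric Set MeasureTheory in
/-- Lemma 2.3 (homotopical linking part): if `B` is a bounded invertible operator on a
real Hilbert space `M`, `M₂` a nonzero finite-dimensional subspace with orthogonal
projection `P₂`, `B₀ = P₂ ∘ B` invertible on `M₂` with `‖B₀⁻¹‖ < ϑ`, `u₀ ∈ M₂` a unit
vector, `S = M₁ + u₀`, `Q` the closed `ϑ`-ball of `M₂`, then `B(∂Q) ∩ S = ∅` and every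
continuous `φ : B(Q) → M` fixing `B(∂Q)` pointwise has image meeting `S`. -/
theorem homotopical_link
    (M : Type*) [NormedAddCommGroup M] [InnerProductSpace ℝ M] [CompleteSpace M]
    (M₂ : Submodule ℝ M) [FiniteDimensional ℝ M₂] (hM₂ : M₂ ≠ ⊥)
    (ϑ : ℝ) (hϑ : 0 < ϑ)
    (B : M ≃L[ℝ] M)
    -- `B₀ = P₂ ∘ B` restricted to `M₂` is invertible, with inverse `B₀inv` of norm `< ϑ`
    (B₀inv : M₂ →L[ℝ] M₂)
    (hB₀l : ∀ v : M₂, B₀inv (M₂.orthogonalProjectionOnto (B v)) = v)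
    (hB₀r : ∀ v : M₂, M₂.orthogonalProjectionOnto (B (B₀inv v)) = v)
    (hB₀norm : ‖B₀inv‖ < ϑ)
    (u₀ : M₂) (hu₀ : ‖u₀‖ = 1)
    (S : Set M) (hS : S = (fun m => m + (u₀ : M)) '' (M₂ᗮ : Set M))
    (Q : Set M) (hQ : Q = {v : M | v ∈ M₂ ∧ ‖v‖ ≤ ϑ})
    (bQ : Set M) (hbQ : bQ = {v : M | v ∈ M₂ ∧ ‖v‖ = ϑ}) :
    (B '' bQ) ∩ S = ∅ ∧
      ∀ φ : M → M, ContinuousOn φ (B '' Q) → (∀ x ∈ B '' bQ, φ x = x) →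
        ((φ '' (B '' Q)) ∩ S).Nonempty := by
  have hB₀inj : Function.Injective B₀inv := by
    intro a b hab
    calc a = M₂.orthogonalProjectionOnto (B (B₀inv a)) := (hB₀r a).symm
      _ = M₂.orthogonalProjectionOnto (B (B₀inv b)) := by rw [hab]
      _ = b := hB₀r b
  have hprojS : ∀ z : M, z ∈ S ↔ M₂.orthogonalProjectionOnto z = u₀ := by
    intro z
    rw [hS]
    constructor
    · rintro ⟨m, hm, rfl⟩
      rw [map_add, Submodule.orthogonalProjectionOnto_mem_subspace_eq_self,
        Submodule.orthogonalProjectionOnto_eq_zero_iff.mpr hm, zero_add]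
    · intro hz
      refine ⟨z - (u₀ : M), ?_, by simp⟩
      rw [SetLike.mem_coe, ← Submodule.orthogonalProjectionOnto_eq_zero_iff, map_sub, hz,
        Submodule.orthogonalProjectionOnto_mem_subspace_eq_self, sub_self]
  constructor
  · rw [eq_empty_iff_forall_notMem]
    rintro z ⟨⟨v, hv, rfl⟩, hzS⟩
    rw [hbQ] at hv
    obtain ⟨hvM₂, hvnorm⟩ := hv
    have hproj : M₂.orthogonalProjectionOnto (B v) = u₀ := (hprojS _).mp hzS
    have hl : B₀inv (M₂.orthogonalProjectionOnto (B v)) = ⟨v, hvM₂⟩ := hB₀l ⟨v, hvM₂⟩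
    have hv' : (⟨v, hvM₂⟩ : M₂) = B₀inv u₀ := by
      rw [← hl, hproj]
    have hnorm : ‖(⟨v, hvM₂⟩ : M₂)‖ = ϑ := hvnorm
    rw [hv'] at hnorm
    have hle : ‖B₀inv u₀‖ ≤ ‖B₀inv‖ := by
      have := B₀inv.le_opNorm u₀
      rwa [hu₀, mul_one] at this
    linarith [hnorm ▸ hle]
  · intro φ hφcont hφfix
    set n := Module.finrank ℝ M₂ with hn
    set iso : M₂ ≃ₗᵢ[ℝ] EuclideanSpace ℝ (Fin n) := (stdOrthonormalBasis ℝ M₂).repr with hiso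
    set fM : M₂ → M₂ := fun w =>
      ϑ⁻¹ • (B₀inv (M₂.orthogonalProjectionOnto (φ (B ((ϑ • w : M₂) : M))))) with hfM
    set fE : EuclideanSpace ℝ (Fin n) → EuclideanSpace ℝ (Fin n) :=
      fun x => iso (fM (iso.symm x)) with hfE
    have hmem : ∀ w : M₂, ‖w‖ ≤ 1 → (B ((ϑ • w : M₂) : M)) ∈ B '' Q := by
      intro w hw
      refine ⟨((ϑ • w : M₂) : M), ?_, rfl⟩
      rw [hQ]
      refine ⟨SetLike.coe_mem _, ?_⟩
      have h1 : ‖((ϑ • w : M₂) : M)‖ = ϑ * ‖w‖ := by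
        rw [← Submodule.coe_norm, norm_smul, Real.norm_eq_abs, abs_of_pos hϑ]
      rw [h1]
      nlinarith
    have hsphere : ∀ w : M₂, ‖w‖ = 1 → (B ((ϑ • w : M₂) : M)) ∈ B '' bQ := by
      intro w hw
      refine ⟨((ϑ • w : M₂) : M), ?_, rfl⟩
      rw [hbQ]
      refine ⟨SetLike.coe_mem _, ?_⟩
      rw [← Submodule.coe_norm, norm_smul, Real.norm_eq_abs, abs_of_pos hϑ, hw, mul_one]
    -- continuity
    have hco : ContinuousOn fE (closedBall (0 : EuclideanSpace ℝ (Fin n)) 1) := by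
      have h1 : Continuous (fun w : M₂ => B ((ϑ • w : M₂) : M)) := by
        exact B.continuous.comp (continuous_subtype_val.comp
          (continuous_const.fun_smul continuous_id))
      have h2 : ContinuousOn (fun w : M₂ => φ (B ((ϑ • w : M₂) : M))) {w : M₂ | ‖w‖ ≤ 1} := by
        apply hφcont.comp h1.continuousOn
        intro w hw
        exact hmem w hw
      have h3 : ContinuousOn fM {w : M₂ | ‖w‖ ≤ 1} := by
        apply ContinuousOn.fun_const_smul
        exact (B₀inv.continuous.comp M₂.orthogonalProjectionOnto.continuous).comp_continuousOn h2
      apply iso.continuous.comp_continuousOn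
      apply h3.comp iso.symm.continuous.continuousOn
      intro x hx
      rw [mem_setOf_eq, iso.symm.norm_map]
      exact mem_closedBall_zero_iff.mp hx
    -- boundary
    have hbdry : ∀ x ∈ sphere (0 : EuclideanSpace ℝ (Fin n)) 1, fE x = x := by
      intro x hx
      have hw1 : ‖iso.symm x‖ = 1 := by
        rw [iso.symm.norm_map]
        exact mem_sphere_zero_iff_norm.mp hx
      set w := iso.symm x with hwdef
      have hfixd := hφfix _ (hsphere w hw1)
      have hfMw : fM w = w := by
        show ϑ⁻¹ • (B₀inv (M₂.orthogonalProjectionOnto (φ (B ((ϑ • w : M₂) : M))))) = w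
        rw [hfixd, hB₀l (ϑ • w), smul_smul, inv_mul_cancel₀ hϑ.ne', one_smul]
      show iso (fM (iso.symm x)) = x
      rw [← hwdef, hfMw, hwdef, iso.apply_symm_apply]
    -- target
    set y : EuclideanSpace ℝ (Fin n) := iso (ϑ⁻¹ • B₀inv u₀) with hy
    have hynorm : ‖y‖ < 1 := by
      rw [hy, iso.norm_map, norm_smul, Real.norm_eq_abs, abs_of_pos (inv_pos.mpr hϑ)]
      have hle : ‖B₀inv u₀‖ ≤ ‖B₀inv‖ := by
        have := B₀inv.le_opNorm u₀
        rwa [hu₀, mul_one] at this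
      calc ϑ⁻¹ * ‖B₀inv u₀‖ ≤ ϑ⁻¹ * ‖B₀inv‖ :=
            mul_le_mul_of_nonneg_left hle (inv_pos.mpr hϑ).le
        _ < ϑ⁻¹ * ϑ := mul_lt_mul_of_pos_left hB₀norm (inv_pos.mpr hϑ)
        _ = 1 := inv_mul_cancel₀ hϑ.ne'
    obtain ⟨x, hxD, hfx⟩ := retraction_surj hco hbdry hynorm
    set w := iso.symm x with hwdef
    have hw1 : ‖w‖ ≤ 1 := by
      rw [hwdef, iso.symm.norm_map]
      exact mem_closedBall_zero_iff.mp hxD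
    have hfMw : fM w = ϑ⁻¹ • B₀inv u₀ := by
      apply iso.injective
      have h1 : iso (fM w) = fE x := rfl
      rw [h1, hfx, hy]
    have hBinveq : B₀inv (M₂.orthogonalProjectionOnto (φ (B ((ϑ • w : M₂) : M)))) = B₀inv u₀ := by
      have h2 : ϑ⁻¹ • (B₀inv (M₂.orthogonalProjectionOnto (φ (B ((ϑ • w : M₂) : M)))))
          = ϑ⁻¹ • (B₀inv u₀) := hfMw
      exact smul_right_injective M₂ (inv_ne_zero hϑ.ne') h2
    have hproj : M₂.orthogonalProjectionOnto (φ (B ((ϑ • w : M₂) : M))) = u₀ := hB₀inj hBinveq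
    refine ⟨φ (B ((ϑ • w : M₂) : M)), ?_, ?_⟩
    · exact mem_image_of_mem φ (hmem w hw1)
    · exact (hprojS _).mpr hproj
end
end

section
/- Let τ > 0 and s ∈ [1, ∞). Suppose (f_m) is a sequence in L²(ℝ/τℤ, ℂ) whose Fourier coefficients a_j^{(m)} (j ∈ ℤ) satisfy sup_m ( |a₀^{(m)}|² + Σ_{j∈ℤ} |j| |a_j^{(m)}|² ) < ∞. Then (f_m) has a subsequence that converges in the L^s(ℝ/τℤ, ℂ) norm. (Compact embedding part of Lemma 2.1 of the paper: the embedding of W^{1/2,2} of the circle into L^s is compact.) -/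
open MeasureTheory Filter AddCircle
open scoped ENNReal

noncomputable section

namespace HalfSobolevCompact

/-- Dyadic index sets. -/
def Fn (n : ℕ) : Finset ℤ := Finset.Ioo (-(2 ^ n : ℤ)) (2 ^ n)

def blk (n : ℕ) : Finset ℤ := (Fn (n + 1)).filter fun j => (2 ^ n : ℤ) ≤ |j|

lemma mem_Fn {n : ℕ} {j : ℤ} : j ∈ Fn n ↔ |j| < 2 ^ n := by
  simp [Fn, Finset.mem_Ioo, abs_lt]

lemma Fn_mono : Monotone Fn := by
  intro a b hab j hj
  rw [mem_Fn] at hj ⊢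
  exact lt_of_lt_of_le hj (pow_le_pow_right₀ (by norm_num) hab)

lemma exists_mem_Fn (j : ℤ) : ∃ n, j ∈ Fn n := by
  refine ⟨j.natAbs + 1, ?_⟩
  rw [mem_Fn]
  have h1 : j.natAbs < 2 ^ (j.natAbs + 1) :=
    lt_of_lt_of_le Nat.lt_two_pow_self (Nat.pow_le_pow_right (by norm_num) (Nat.le_succ _))
  calc |j| = (j.natAbs : ℤ) := Int.abs_eq_natAbs j
    _ < ((2 ^ (j.natAbs + 1) : ℕ) : ℤ) := by exact_mod_cast h1
    _ = 2 ^ (j.natAbs + 1) := by push_cast; ring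

lemma sum_split {M : Type*} [AddCommMonoid M] (n : ℕ) (φ : ℤ → M) :
    ∑ j ∈ Fn (n + 1), φ j = ∑ j ∈ Fn n, φ j + ∑ j ∈ blk n, φ j := by
  classical
  have hsub : Fn n = (Fn (n + 1)).filter (fun j => ¬ (2 ^ n : ℤ) ≤ |j|) := by
    ext j
    simp only [Finset.mem_filter, mem_Fn, not_le]
    have h2 : (2 ^ n : ℤ) ≤ 2 ^ (n + 1) := pow_le_pow_right₀ (by norm_num) (Nat.le_succ _)
    constructor
    · intro h; exact ⟨lt_of_lt_of_le h h2, h⟩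
    · intro h; exact h.2
  rw [blk, hsub]
  exact ((Finset.sum_filter_add_sum_filter_not (Fn (n + 1)) _ φ).symm).trans (add_comm _ _)

lemma blk_abs {n : ℕ} {j : ℤ} (hj : j ∈ blk n) : (2 ^ n : ℤ) ≤ |j| :=
  (Finset.mem_filter.1 hj).2

lemma card_blk (n : ℕ) : (blk n).card ≤ 2 ^ (n + 2) := by
  have h1 : (blk n).card ≤ (Fn (n + 1)).card :=
    Finset.card_le_card (Finset.filter_subset _ _)
  have h2 : (Fn (n + 1)).card = ((2 ^ (n + 1) : ℤ) - -(2 ^ (n + 1)) - 1).toNat :=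
    Int.card_Ioo _ _
  have h3 : ((2 ^ (n + 1) : ℤ) - -(2 ^ (n + 1)) - 1).toNat ≤ 2 ^ (n + 2) := by
    rw [Int.toNat_le]
    push_cast
    have : (2 ^ (n + 2) : ℤ) = 2 ^ (n + 1) + 2 ^ (n + 1) := by ring
    linarith
  omega

lemma sum_nonneg_weight (c : ℤ → ℂ) (F : Finset ℤ) :
    0 ≤ ∑ j ∈ F, (|j| : ℝ) * ‖c j‖ ^ 2 :=
  Finset.sum_nonneg fun j _ => by positivity

lemma blk_sum_norm_le (c : ℤ → ℂ) {D : ℝ}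
    (hD : ∀ F : Finset ℤ, ∑ j ∈ F, (|j| : ℝ) * ‖c j‖ ^ 2 ≤ D) (n : ℕ) :
    ∑ j ∈ blk n, ‖c j‖ ≤ 2 * Real.sqrt D := by
  have hD0 : 0 ≤ D := le_trans (by simp) (hD ∅)
  have habs : ∀ j ∈ blk n, ((2 : ℝ) ^ n) ≤ |(j : ℝ)| := by
    intro j hj
    have := blk_abs hj
    calc ((2:ℝ) ^ n) = ((2 ^ n : ℤ) : ℝ) := by push_cast; ring
      _ ≤ ((|j| : ℤ) : ℝ) := by exact_mod_cast this
      _ = |(j : ℝ)| := by push_cast; ring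
  have key : ∑ j ∈ blk n, ‖c j‖
      = ∑ j ∈ blk n, (Real.sqrt |(j : ℝ)|)⁻¹ * (Real.sqrt |(j : ℝ)| * ‖c j‖) := by
    refine Finset.sum_congr rfl fun j hj => ?_
    have h0 : (0:ℝ) < |(j : ℝ)| := lt_of_lt_of_le (by positivity) (habs j hj)
    have hs : Real.sqrt |(j : ℝ)| ≠ 0 := (Real.sqrt_pos.2 h0).ne'
    field_simp
  rw [key]
  refine (Real.sum_mul_le_sqrt_mul_sqrt _ _ _).trans ?_
  have h1 : ∑ j ∈ blk n, ((Real.sqrt |(j : ℝ)|)⁻¹) ^ 2 ≤ 4 := by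
    have hle : ∀ j ∈ blk n, ((Real.sqrt |(j : ℝ)|)⁻¹) ^ 2 ≤ ((2 : ℝ) ^ n)⁻¹ := by
      intro j hj
      have h0 : (0:ℝ) < |(j : ℝ)| := lt_of_lt_of_le (by positivity) (habs j hj)
      rw [inv_pow, Real.sq_sqrt (abs_nonneg _)]
      exact inv_anti₀ (by positivity) (habs j hj)
    calc ∑ j ∈ blk n, ((Real.sqrt |(j : ℝ)|)⁻¹) ^ 2
        ≤ (blk n).card • ((2 : ℝ) ^ n)⁻¹ := Finset.sum_le_card_nsmul _ _ _ hle
      _ = ((blk n).card : ℝ) * ((2 : ℝ) ^ n)⁻¹ := by rw [nsmul_eq_mul]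
      _ ≤ ((2 ^ (n + 2) : ℕ) : ℝ) * ((2 : ℝ) ^ n)⁻¹ := by
          gcongr
          exact_mod_cast card_blk n
      _ = 4 := by
          push_cast
          rw [pow_add]
          field_simp
          norm_num
  have h2 : ∑ j ∈ blk n, (Real.sqrt |(j : ℝ)| * ‖c j‖) ^ 2 ≤ D := by
    have heq : ∀ j ∈ blk n, (Real.sqrt |(j : ℝ)| * ‖c j‖) ^ 2 = (|j| : ℝ) * ‖c j‖ ^ 2 := by
      intro j hj
      rw [mul_pow, Real.sq_sqrt (abs_nonneg _)]
    rw [Finset.sum_congr rfl heq]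
    exact hD _
  calc Real.sqrt (∑ j ∈ blk n, ((Real.sqrt |(j : ℝ)|)⁻¹) ^ 2)
        * Real.sqrt (∑ j ∈ blk n, (Real.sqrt |(j : ℝ)| * ‖c j‖) ^ 2)
      ≤ Real.sqrt 4 * Real.sqrt D :=
        mul_le_mul (Real.sqrt_le_sqrt h1) (Real.sqrt_le_sqrt h2) (Real.sqrt_nonneg _)
          (Real.sqrt_nonneg _)
    _ = 2 * Real.sqrt D := by
        rw [show (4:ℝ) = 2 ^ 2 by norm_num, Real.sqrt_sq (by norm_num : (0:ℝ) ≤ 2)]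

lemma blk_sum_sq_le (c : ℤ → ℂ) {D : ℝ}
    (hD : ∀ F : Finset ℤ, ∑ j ∈ F, (|j| : ℝ) * ‖c j‖ ^ 2 ≤ D) (n : ℕ) :
    ∑ j ∈ blk n, ‖c j‖ ^ 2 ≤ (2 : ℝ)⁻¹ ^ n * D := by
  have hle : ∀ j ∈ blk n, ‖c j‖ ^ 2 ≤ (2 : ℝ)⁻¹ ^ n * ((|j| : ℝ) * ‖c j‖ ^ 2) := by
    intro j hj
    have habs : ((2 : ℝ) ^ n) ≤ (|j| : ℝ) := by
      have := blk_abs hj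
      exact_mod_cast (by exact_mod_cast this : ((2 ^ n : ℤ) : ℝ) ≤ ((|j| : ℤ) : ℝ))
    have h1 : (1 : ℝ) ≤ (2 : ℝ)⁻¹ ^ n * (|j| : ℝ) := by
      rw [inv_pow, ← div_eq_inv_mul, le_div_iff₀ (by positivity : (0:ℝ) < (2:ℝ)^n)]
      simpa using habs
    nlinarith [sq_nonneg ‖c j‖]
  calc ∑ j ∈ blk n, ‖c j‖ ^ 2 ≤ ∑ j ∈ blk n, (2 : ℝ)⁻¹ ^ n * ((|j| : ℝ) * ‖c j‖ ^ 2) :=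
        Finset.sum_le_sum hle
    _ = (2 : ℝ)⁻¹ ^ n * ∑ j ∈ blk n, (|j| : ℝ) * ‖c j‖ ^ 2 := by rw [Finset.mul_sum]
    _ ≤ (2 : ℝ)⁻¹ ^ n * D := by
        have := hD (blk n)
        have h0 : (0:ℝ) ≤ (2 : ℝ)⁻¹ ^ n := by positivity
        nlinarith [sum_nonneg_weight c (blk n)]

variable (τ : ℝ) [hτ : Fact (0 < τ)]

lemma trig_coe (c : ℤ → ℂ) (F : Finset ℤ) :
    (⇑(∑ j ∈ F, c j • fourierLp (T := τ) 2 j) : AddCircle τ → ℂ)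
      =ᵐ[haarAddCircle] fun x => ∑ j ∈ F, c j * fourier j x := by
  classical
  induction F using Finset.induction_on with
  | empty =>
      simp only [Finset.sum_empty]
      filter_upwards [Lp.coeFn_zero (E := ℂ) (p := 2) (μ := (haarAddCircle : Measure (AddCircle τ)))] with x hx
      simpa using hx
  | insert a s hj ih =>
      have h1 := Lp.coeFn_add (c a • fourierLp (T := τ) 2 a) (∑ j ∈ s, c j • fourierLp (T := τ) 2 j)
      have h2 := Lp.coeFn_smul (c a) (fourierLp (T := τ) 2 a)
      have h3 := coeFn_fourierLp (T := τ) 2 a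
      rw [Finset.sum_insert hj]
      filter_upwards [h1, h2, h3, ih] with x hx1 hx2 hx3 hx4
      rw [Finset.sum_insert hj]
      simp only [hx1, Pi.add_apply, hx2, Pi.smul_apply, smul_eq_mul, hx4]
      rw [hx3]

lemma trig_lintegral_sq (c : ℤ → ℂ) (F : Finset ℤ) :
    ∫⁻ x, (‖∑ j ∈ F, c j * fourier j x‖₊ : ℝ≥0∞) ^ (2:ℝ)
        ∂(haarAddCircle : Measure (AddCircle τ))
      = ENNReal.ofReal (∑ j ∈ F, ‖c j‖ ^ 2) := by
  classical
  set Q : Lp ℂ 2 (haarAddCircle : Measure (AddCircle τ)) :=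
    ∑ j ∈ F, c j • fourierLp (T := τ) 2 j with hQ
  have hnorm : ‖Q‖ ^ 2 = ∑ j ∈ F, ‖c j‖ ^ 2 := by
    have hinner : (inner ℂ Q Q : ℂ) = ∑ j ∈ F, (starRingEnd ℂ) (c j) * c j :=
      (orthonormal_fourier (T := τ)).inner_sum c c F
    have h : ‖Q‖ ^ 2 = RCLike.re (∑ j ∈ F, (starRingEnd ℂ) (c j) * c j) := by
      rw [norm_sq_eq_re_inner (𝕜 := ℂ) Q, hinner]
    rw [h, map_sum]
    refine Finset.sum_congr rfl fun j _ => ?_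
    rw [RCLike.conj_mul]
    norm_cast
  have hsn : eLpNorm (fun x => ∑ j ∈ F, c j * fourier j x) 2
      (haarAddCircle : Measure (AddCircle τ)) = ENNReal.ofReal ‖Q‖ := by
    rw [← eLpNorm_congr_ae (trig_coe τ c F)]
    rw [Lp.norm_def, ENNReal.ofReal_toReal (Lp.eLpNorm_ne_top Q)]
  have hformula := eLpNorm_eq_lintegral_rpow_enorm_toReal (f := fun x => ∑ j ∈ F, c j * fourier j x)
    (μ := (haarAddCircle : Measure (AddCircle τ))) two_ne_zero ENNReal.ofNat_ne_top
  rw [hformula] at hsn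
  have htoReal : ((2 : ℝ≥0∞)).toReal = (2:ℝ) := by simp
  rw [htoReal] at hsn
  have h2 : (∫⁻ x, (‖∑ j ∈ F, c j * fourier j x‖₊ : ℝ≥0∞) ^ (2:ℝ)
        ∂(haarAddCircle : Measure (AddCircle τ)))
      = (ENNReal.ofReal ‖Q‖) ^ (2:ℝ) := by
    rw [← hsn, ← ENNReal.rpow_mul]
    norm_num
    rfl
  rw [h2, ENNReal.ofReal_rpow_of_nonneg (norm_nonneg _) (by norm_num), Real.rpow_two, hnorm]

lemma trig_pointwise_bound (c : ℤ → ℂ) (F : Finset ℤ) (x : AddCircle τ) :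
    ‖∑ j ∈ F, c j * fourier j x‖ ≤ ∑ j ∈ F, ‖c j‖ := by
  refine (norm_sum_le _ _).trans (Finset.sum_le_sum fun j _ => ?_)
  rw [norm_mul]
  have h1 : ‖(fourier j : C(AddCircle τ, ℂ)) x‖ ≤ 1 := by
    refine le_trans (ContinuousMap.norm_coe_le_norm _ _) ?_
    rw [fourier_norm]
  calc ‖c j‖ * ‖(fourier j : C(AddCircle τ, ℂ)) x‖ ≤ ‖c j‖ * 1 := by
        exact mul_le_mul_of_nonneg_left h1 (norm_nonneg _)
    _ = ‖c j‖ := mul_one _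

lemma block_bound (r : ℝ) (hr : 2 ≤ r) (c : ℤ → ℂ) (F : Finset ℤ) {A B : ℝ}
    (hA : ∑ j ∈ F, ‖c j‖ ≤ A) (hB : ∑ j ∈ F, ‖c j‖ ^ 2 ≤ B) :
    eLpNorm (fun x : AddCircle τ => ∑ j ∈ F, c j * fourier j x) (ENNReal.ofReal r) volume
      ≤ ENNReal.ofReal (A ^ (r - 2) * (τ * B)) ^ (1 / r) := by
  have hr0 : (0:ℝ) < r := by linarith
  have hA0 : 0 ≤ A := le_trans (Finset.sum_nonneg fun j _ => norm_nonneg _) hA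
  have hB0 : 0 ≤ B := le_trans (Finset.sum_nonneg fun j _ => sq_nonneg _) hB
  have hRne0 : (ENNReal.ofReal r) ≠ 0 := by
    simpa using hr0
  have hRnetop : (ENNReal.ofReal r) ≠ ∞ := ENNReal.ofReal_ne_top
  rw [eLpNorm_eq_lintegral_rpow_enorm_toReal hRne0 hRnetop, ENNReal.toReal_ofReal hr0.le]
  refine ENNReal.rpow_le_rpow ?_ (by positivity)
  -- bound the lintegral
  have hpt : ∀ x : AddCircle τ,
      (‖∑ j ∈ F, c j * fourier j x‖₊ : ℝ≥0∞) ^ r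
        ≤ ENNReal.ofReal (A ^ (r - 2)) * (‖∑ j ∈ F, c j * fourier j x‖₊ : ℝ≥0∞) ^ (2:ℝ) := by
    intro x
    set y : ℝ≥0∞ := (‖∑ j ∈ F, c j * fourier j x‖₊ : ℝ≥0∞) with hy
    have hyA : y ≤ ENNReal.ofReal A := by
      rw [hy, ← enorm_eq_nnnorm, ← ofReal_norm_eq_enorm]
      exact ENNReal.ofReal_le_ofReal ((trig_pointwise_bound τ c F x).trans hA)
    have hsplit : y ^ r = y ^ (r - 2) * y ^ (2:ℝ) := by
      rw [← ENNReal.rpow_add_of_nonneg _ _ (by linarith) (by norm_num)]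
      norm_num
    rw [hsplit]
    refine mul_le_mul_left ?_ _
    calc y ^ (r - 2) ≤ (ENNReal.ofReal A) ^ (r - 2) :=
          ENNReal.rpow_le_rpow hyA (by linarith)
      _ = ENNReal.ofReal (A ^ (r - 2)) := ENNReal.ofReal_rpow_of_nonneg hA0 (by linarith)
  calc ∫⁻ x, (‖∑ j ∈ F, c j * fourier j x‖₊ : ℝ≥0∞) ^ r ∂volume
      ≤ ∫⁻ x, ENNReal.ofReal (A ^ (r - 2))
          * (‖∑ j ∈ F, c j * fourier j x‖₊ : ℝ≥0∞) ^ (2:ℝ) ∂volume :=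
        lintegral_mono hpt
    _ = ENNReal.ofReal (A ^ (r - 2))
          * ∫⁻ x, (‖∑ j ∈ F, c j * fourier j x‖₊ : ℝ≥0∞) ^ (2:ℝ) ∂volume :=
        lintegral_const_mul' _ _ ENNReal.ofReal_ne_top
    _ ≤ ENNReal.ofReal (A ^ (r - 2)) * (ENNReal.ofReal τ * ENNReal.ofReal B) := by
        refine mul_le_mul_right ?_ _
        rw [volume_eq_smul_haarAddCircle, lintegral_smul_measure, trig_lintegral_sq τ c F]
        exact mul_le_mul_right (ENNReal.ofReal_le_ofReal hB) _
    _ = ENNReal.ofReal (A ^ (r - 2) * (τ * B)) := by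
        rw [← ENNReal.ofReal_mul hτ.out.le, ← ENNReal.ofReal_mul (Real.rpow_nonneg hA0 _)]

/-- Geometric majorant for the `n`-th dyadic block. -/
def Φ (τ r D : ℝ) (n : ℕ) : ℝ≥0∞ :=
  ENNReal.ofReal ((2 * Real.sqrt D) ^ (r - 2) * (τ * ((2 : ℝ)⁻¹ ^ n * D))) ^ (1 / r)

/-- Majorant for the tail starting at dyadic level `n`. -/
def Ψ (τ r D : ℝ) (n : ℕ) : ℝ≥0∞ := ∑' k : ℕ, Φ τ r D (n + k)

lemma Φ_eq (r D : ℝ) (hτ0 : 0 ≤ τ) (hD : 0 ≤ D) (hr : 2 ≤ r) (n : ℕ) :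
    Φ τ r D n = ENNReal.ofReal ((2 * Real.sqrt D) ^ (r - 2) * (τ * D)) ^ (1 / r)
      * (ENNReal.ofReal ((2 : ℝ)⁻¹) ^ (1 / r)) ^ n := by
  have hpow0 : (0:ℝ) ≤ (2 * Real.sqrt D) ^ (r - 2) := Real.rpow_nonneg (by positivity) _
  have hinner : (2 * Real.sqrt D) ^ (r - 2) * (τ * ((2 : ℝ)⁻¹ ^ n * D))
      = ((2 * Real.sqrt D) ^ (r - 2) * (τ * D)) * (2 : ℝ)⁻¹ ^ n := by ring
  rw [Φ, hinner, ENNReal.ofReal_mul (by positivity), ENNReal.ofReal_pow (by norm_num),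
    ENNReal.mul_rpow_of_nonneg _ _ (by positivity), ← ENNReal.rpow_natCast
      (ENNReal.ofReal ((2:ℝ)⁻¹)) n, ← ENNReal.rpow_mul, mul_comm (n : ℝ) (1 / r),
    ENNReal.rpow_mul, ENNReal.rpow_natCast]

lemma Ψ_eq (r D : ℝ) (hτ0 : 0 ≤ τ) (hD : 0 ≤ D) (hr : 2 ≤ r) (n : ℕ) :
    Ψ τ r D n = ENNReal.ofReal ((2 * Real.sqrt D) ^ (r - 2) * (τ * D)) ^ (1 / r)
      * (1 - ENNReal.ofReal ((2 : ℝ)⁻¹) ^ (1 / r))⁻¹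
      * (ENNReal.ofReal ((2 : ℝ)⁻¹) ^ (1 / r)) ^ n := by
  set K := ENNReal.ofReal ((2 * Real.sqrt D) ^ (r - 2) * (τ * D)) ^ (1 / r)
  set θ := ENNReal.ofReal ((2 : ℝ)⁻¹) ^ (1 / r)
  have : Ψ τ r D n = ∑' k : ℕ, K * θ ^ (n + k) := by
    rw [Ψ]
    exact tsum_congr fun k => Φ_eq τ r D hτ0 hD hr (n + k)
  rw [this]
  simp_rw [pow_add, ← mul_assoc]
  rw [ENNReal.tsum_mul_left, ENNReal.tsum_geometric]
  ring

lemma theta_lt_one (r : ℝ) (hr : 2 ≤ r) :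
    ENNReal.ofReal ((2 : ℝ)⁻¹) ^ (1 / r) < 1 := by
  refine ENNReal.rpow_lt_one ?_ (by positivity)
  rw [← ENNReal.ofReal_one]
  exact ENNReal.ofReal_lt_ofReal_iff_of_nonneg (by norm_num) |>.2 (by norm_num)

lemma Ψ_ne_top (r D : ℝ) (hτ0 : 0 ≤ τ) (hD : 0 ≤ D) (hr : 2 ≤ r) (n : ℕ) :
    Ψ τ r D n ≠ ∞ := by
  rw [Ψ_eq τ r D hτ0 hD hr n]
  have hθ := theta_lt_one r hr
  refine ENNReal.mul_ne_top (ENNReal.mul_ne_top ?_ ?_) ?_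
  · exact ENNReal.rpow_ne_top_of_nonneg (by positivity) ENNReal.ofReal_ne_top
  · rw [Ne, ENNReal.inv_eq_top, tsub_eq_zero_iff_le]
    exact fun h => absurd h (not_le.2 hθ)
  · exact ENNReal.pow_ne_top hθ.ne_top

lemma Ψ_tendsto_zero (r D : ℝ) (hτ0 : 0 ≤ τ) (hD : 0 ≤ D) (hr : 2 ≤ r) :
    Tendsto (Ψ τ r D) atTop (nhds 0) := by
  have hθ := theta_lt_one r hr
  have h0 : Tendsto (fun n : ℕ => (ENNReal.ofReal ((2 : ℝ)⁻¹) ^ (1 / r)) ^ n) atTop (nhds 0) :=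
    ENNReal.tendsto_pow_atTop_nhds_zero_of_lt_one hθ
  have hC : (ENNReal.ofReal ((2 * Real.sqrt D) ^ (r - 2) * (τ * D)) ^ (1 / r)
      * (1 - ENNReal.ofReal ((2 : ℝ)⁻¹) ^ (1 / r))⁻¹) ≠ ∞ := by
    refine ENNReal.mul_ne_top ?_ ?_
    · exact ENNReal.rpow_ne_top_of_nonneg (by positivity) ENNReal.ofReal_ne_top
    · rw [Ne, ENNReal.inv_eq_top, tsub_eq_zero_iff_le]
      exact fun h => absurd h (not_le.2 hθ)
  have := ENNReal.Tendsto.const_mul h0 (Or.inr hC)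
  rw [mul_zero] at this
  refine this.congr fun n => ?_
  rw [Ψ_eq τ r D hτ0 hD hr n]

lemma haar_eq_smul_volume :
    (haarAddCircle : Measure (AddCircle τ)) = (ENNReal.ofReal τ)⁻¹ • (volume : Measure (AddCircle τ)) := by
  rw [volume_eq_smul_haarAddCircle, smul_smul,
    ENNReal.inv_mul_cancel (by simpa using hτ.out) ENNReal.ofReal_ne_top, one_smul]

lemma memLp_haar_of_volume {p : ℝ≥0∞} {h : AddCircle τ → ℂ} (hh : MemLp h p volume) :
    MemLp h p (haarAddCircle : Measure (AddCircle τ)) := by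
  rw [haar_eq_smul_volume τ]
  exact hh.smul_measure (by simp [hτ.out])

lemma memLp_volume_of_haar {p : ℝ≥0∞} {h : AddCircle τ → ℂ}
    (hh : MemLp h p (haarAddCircle : Measure (AddCircle τ))) :
    MemLp h p volume := by
  rw [volume_eq_smul_haarAddCircle]
  exact hh.smul_measure ENNReal.ofReal_ne_top

lemma ae_volume_of_ae_haar {P : AddCircle τ → Prop}
    (h : ∀ᵐ x ∂(haarAddCircle : Measure (AddCircle τ)), P x) :
    ∀ᵐ x ∂(volume : Measure (AddCircle τ)), P x := by
  rw [volume_eq_smul_haarAddCircle, Measure.ae_ennreal_smul_measure_eq (by simpa using hτ.out)]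
  exact h

lemma integrable_fourier_mul {h : AddCircle τ → ℂ} (hh : MemLp h 2 volume) (n : ℤ) :
    Integrable (fun t => (fourier (-n) t : ℂ) • h t)
      (haarAddCircle : Measure (AddCircle τ)) := by
  have h1 : MemLp h 2 (haarAddCircle : Measure (AddCircle τ)) := memLp_haar_of_volume τ hh
  have h2 : Integrable h (haarAddCircle : Measure (AddCircle τ)) := by
    have := h1.mono_exponent (p := 1) (by norm_num)
    exact memLp_one_iff_integrable.1 this
  have hb : ∃ C, ∀ x : AddCircle τ, ‖(fourier (-n) : C(AddCircle τ, ℂ)) x‖ ≤ C := by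
    refine ⟨1, fun x => ?_⟩
    refine le_trans (ContinuousMap.norm_coe_le_norm _ _) ?_
    rw [fourier_norm]
  have := h2.bdd_mul ((fourier (-n)).continuous.aestronglyMeasurable) (ae_of_all _ hb.choose_spec)
  exact this.congr (by filter_upwards with x; simp [smul_eq_mul])

lemma fourierCoeff_sub {h₁ h₂ : AddCircle τ → ℂ} (H₁ : MemLp h₁ 2 volume)
    (H₂ : MemLp h₂ 2 volume) (n : ℤ) :
    fourierCoeff (h₁ - h₂) n = fourierCoeff h₁ n - fourierCoeff h₂ n := by
  simp only [fourierCoeff, Pi.sub_apply, smul_sub]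
  exact integral_sub (integrable_fourier_mul τ H₁ n) (integrable_fourier_mul τ H₂ n)

/-- Partial Fourier sums over the dyadic window `Fn n`. -/
def S (c : ℤ → ℂ) (n : ℕ) : AddCircle τ → ℂ := fun x => ∑ j ∈ Fn n, c j * fourier j x

/-- The `n`-th dyadic block of the Fourier series. -/
def blkS (c : ℤ → ℂ) (n : ℕ) : AddCircle τ → ℂ := fun x => ∑ j ∈ blk n, c j * fourier j x

lemma S_cont (c : ℤ → ℂ) (n : ℕ) : Continuous (S τ c n) :=
  continuous_finset_sum _ fun j _ => continuous_const.mul (fourier j).continuous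

lemma blkS_cont (c : ℤ → ℂ) (n : ℕ) : Continuous (blkS τ c n) :=
  continuous_finset_sum _ fun j _ => continuous_const.mul (fourier j).continuous

lemma telescope (c : ℤ → ℂ) (n d : ℕ) :
    S τ c (n + d) = S τ c n + ∑ k ∈ Finset.range d, blkS τ c (n + k) := by
  induction d with
  | zero => simp
  | succ d ih =>
      funext x
      have : S τ c (n + (d + 1)) x = S τ c (n + d) x + blkS τ c (n + d) x :=
        sum_split (n + d) _
      rw [this, ih]
      simp [Finset.sum_range_succ]
      ring

lemma blkS_bound (r : ℝ) (hr : 2 ≤ r) (c : ℤ → ℂ) {D : ℝ}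
    (hD : ∀ F : Finset ℤ, ∑ j ∈ F, (|j| : ℝ) * ‖c j‖ ^ 2 ≤ D) (m : ℕ) :
    eLpNorm (blkS τ c m) (ENNReal.ofReal r) volume ≤ Φ τ r D m :=
  block_bound τ r hr c (blk m) (blk_sum_norm_le c hD m) (blk_sum_sq_le c hD m)

lemma diff_bound (r : ℝ) (hr : 2 ≤ r) (c : ℤ → ℂ) {D : ℝ}
    (hD : ∀ F : Finset ℤ, ∑ j ∈ F, (|j| : ℝ) * ‖c j‖ ^ 2 ≤ D) {n m : ℕ} (hnm : n ≤ m) :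
    eLpNorm (fun x => S τ c m x - S τ c n x) (ENNReal.ofReal r) volume ≤ Ψ τ r D n := by
  obtain ⟨d, rfl⟩ : ∃ d, m = n + d := ⟨m - n, by omega⟩
  have heq : (fun x => S τ c (n + d) x - S τ c n x)
      = ∑ k ∈ Finset.range d, blkS τ c (n + k) := by
    funext x
    rw [telescope τ c n d]
    simp
  rw [heq]
  calc eLpNorm (∑ k ∈ Finset.range d, blkS τ c (n + k)) (ENNReal.ofReal r) volume
      ≤ ∑ k ∈ Finset.range d, eLpNorm (blkS τ c (n + k)) (ENNReal.ofReal r) volume :=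
        eLpNorm_sum_le (fun k _ => (blkS_cont τ c (n + k)).aestronglyMeasurable)
          (by
            rw [← ENNReal.ofReal_one]
            exact ENNReal.ofReal_le_ofReal (by linarith))
    _ ≤ ∑ k ∈ Finset.range d, Φ τ r D (n + k) :=
        Finset.sum_le_sum fun k _ => blkS_bound τ r hr c hD (n + k)
    _ ≤ Ψ τ r D n := ENNReal.sum_le_tsum _

lemma tail_est (r : ℝ) (hr : 2 ≤ r) {D : ℝ} (h : AddCircle τ → ℂ) (hh : MemLp h 2 volume)
    (hD : ∀ F : Finset ℤ, ∑ j ∈ F, (|j| : ℝ) * ‖fourierCoeff h j‖ ^ 2 ≤ D) (n : ℕ) :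
    eLpNorm (h - S τ (fourierCoeff h) n) (ENNReal.ofReal r) volume ≤ Ψ τ r D n := by
  classical
  set c : ℤ → ℂ := fourierCoeff h with hc
  have hhH : MemLp h 2 (haarAddCircle : Measure (AddCircle τ)) := memLp_haar_of_volume τ hh
  set H : Lp ℂ 2 (haarAddCircle : Measure (AddCircle τ)) := hhH.toLp h with hH
  have hHh : ⇑H =ᵐ[(haarAddCircle : Measure (AddCircle τ))] h := hhH.coeFn_toLp
  have hHcoeff : ∀ i, fourierCoeff (⇑H) i = c i := by
    intro i
    refine integral_congr_ae ?_
    filter_upwards [hHh] with x hx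
    rw [hx]
  have hsum := hasSum_fourier_series_L2 H
  simp_rw [hHcoeff] at hsum
  set P : ℕ → Lp ℂ 2 (haarAddCircle : Measure (AddCircle τ)) :=
    fun m => ∑ j ∈ Fn m, c j • fourierLp (T := τ) 2 j with hP
  have hFnlim : Tendsto P atTop (nhds H) :=
    hsum.comp (tendsto_atTop_finset_of_monotone Fn_mono exists_mem_Fn)
  have h5 : Tendsto (fun m => eLpNorm (⇑(P m) - ⇑H) 2
      (haarAddCircle : Measure (AddCircle τ))) atTop (nhds 0) :=
    (Lp.tendsto_Lp_iff_tendsto_eLpNorm' P H).1 hFnlim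
  have h6 : TendstoInMeasure (haarAddCircle : Measure (AddCircle τ))
      (fun m => ⇑(P m)) atTop ⇑H :=
    tendstoInMeasure_of_tendsto_eLpNorm_of_ne_top two_ne_zero ENNReal.ofNat_ne_top
      (fun m => Lp.aestronglyMeasurable _) (Lp.aestronglyMeasurable _) h5
  obtain ⟨ns, hns, hae⟩ := h6.exists_seq_tendsto_ae
  have hPS : ∀ m, ⇑(P m) =ᵐ[(haarAddCircle : Measure (AddCircle τ))] S τ c m :=
    fun m => trig_coe τ c (Fn m)
  have hae2 : ∀ᵐ x ∂(haarAddCircle : Measure (AddCircle τ)),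
      Tendsto (fun i => S τ c (ns i) x) atTop (nhds (h x)) := by
    have hall : ∀ᵐ x ∂(haarAddCircle : Measure (AddCircle τ)), ∀ m, ⇑(P m) x = S τ c m x :=
      ae_all_iff.2 hPS
    filter_upwards [hae, hall, hHh] with x h1 h2 h3
    rw [h3] at h1
    exact h1.congr fun i => h2 (ns i)
  have hae3 : ∀ᵐ x ∂(volume : Measure (AddCircle τ)),
      Tendsto (fun i => S τ c (ns i) x - S τ c n x) atTop
        (nhds ((h - S τ c n) x)) := by
    refine ae_volume_of_ae_haar τ (hae2.mono fun x hx => ?_)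
    simpa using hx.sub_const (S τ c n x)
  have h10 := Lp.eLpNorm_lim_le_liminf_eLpNorm (p := ENNReal.ofReal r) (μ := volume)
    (f := fun i => fun x => S τ c (ns i) x - S τ c n x)
    (fun i => ((S_cont τ c (ns i)).sub (S_cont τ c n)).aestronglyMeasurable)
    (h - S τ c n) hae3
  refine le_trans h10 ?_
  refine liminf_le_of_frequently_le' ?_
  refine ((eventually_ge_atTop n).mono fun i hi => ?_).frequently
  exact diff_bound τ r hr c hD (le_trans hi (hns.le_apply))

lemma memLp_S (c : ℤ → ℂ) (n : ℕ) (p : ℝ≥0∞) : MemLp (S τ c n) p volume := by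
  refine ⟨(S_cont τ c n).aestronglyMeasurable, ?_⟩
  refine lt_of_le_of_lt (eLpNorm_le_of_ae_bound (C := ∑ j ∈ Fn n, ‖c j‖)
    (ae_of_all _ (trig_pointwise_bound τ c (Fn n)))) ?_
  exact ENNReal.mul_lt_top
    (ENNReal.rpow_ne_top_of_nonneg (by positivity) (measure_ne_top _ _)).lt_top
    ENNReal.ofReal_lt_top

lemma memLp_R (r : ℝ) (hr : 2 ≤ r) {D : ℝ} (h : AddCircle τ → ℂ) (hh : MemLp h 2 volume)
    (hD : ∀ F : Finset ℤ, ∑ j ∈ F, (|j| : ℝ) * ‖fourierCoeff h j‖ ^ 2 ≤ D) :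
    MemLp h (ENNReal.ofReal r) volume := by
  have hD0 : 0 ≤ D := by
    have := hD ∅
    simpa using this
  have h1 : MemLp (h - S τ (fourierCoeff h) 0) (ENNReal.ofReal r) volume := by
    refine ⟨hh.aestronglyMeasurable.sub (S_cont τ _ 0).aestronglyMeasurable, ?_⟩
    exact lt_of_le_of_lt (tail_est τ r hr h hh hD 0)
      (Ψ_ne_top τ r D hτ.out.le hD0 hr 0).lt_top
  have h2 : MemLp (S τ (fourierCoeff h) 0) (ENNReal.ofReal r) volume := memLp_S τ _ 0 _
  have h3 := h1.add h2
  have : (h - S τ (fourierCoeff h) 0) + S τ (fourierCoeff h) 0 = h := sub_add_cancel _ _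
  rwa [this] at h3

end HalfSobolevCompact

open HalfSobolevCompact in
/-- Compact embedding part of Lemma 2.1: a sequence in `L²` of the circle of
circumference `τ` whose `W^{1/2,2}`-norms `(|a₀^{(m)}|² + Σ_j |j| |a_j^{(m)}|²)^{1/2}`
are uniformly bounded has a subsequence converging in the `L^s` norm, `1 ≤ s < ∞`. -/
theorem halfSobolev_compact_embedding
    (τ : ℝ) [hτ : Fact (0 < τ)] (s : ℝ) (hs : 1 ≤ s)
    (f : ℕ → AddCircle τ → ℂ)
    (hL2 : ∀ m, MemLp (f m) 2 volume)
    (hsummable : ∀ m, Summable (fun j : ℤ => (|j| : ℝ) * ‖fourierCoeff (f m) j‖ ^ 2))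
    (hbdd : ∃ C : ℝ, ∀ m, ‖fourierCoeff (f m) 0‖ ^ 2 +
      ∑' j : ℤ, (|j| : ℝ) * ‖fourierCoeff (f m) j‖ ^ 2 ≤ C) :
    ∃ (g : AddCircle τ → ℂ) (ψ : ℕ → ℕ), StrictMono ψ ∧
      MemLp g (ENNReal.ofReal s) volume ∧
      Tendsto (fun m => eLpNorm (f (ψ m) - g) (ENNReal.ofReal s) volume)
        atTop (nhds 0) := by
  classical
  obtain ⟨C₀, hC₀⟩ := hbdd
  set c : ℕ → ℤ → ℂ := fun m => fourierCoeff (f m) with hcdef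
  set C : ℝ := max C₀ 0 with hCdef
  have hC0 : 0 ≤ C := le_max_right _ _
  have hC : ∀ m, ‖c m 0‖ ^ 2 + ∑' j : ℤ, (|j| : ℝ) * ‖c m j‖ ^ 2 ≤ C :=
    fun m => (hC₀ m).trans (le_max_left _ _)
  have htsumnn : ∀ m, 0 ≤ ∑' j : ℤ, (|j| : ℝ) * ‖c m j‖ ^ 2 :=
    fun m => tsum_nonneg fun j => by positivity
  have htsum_le : ∀ m, ∑' j : ℤ, (|j| : ℝ) * ‖c m j‖ ^ 2 ≤ C := by
    intro m
    nlinarith [hC m, sq_nonneg ‖c m 0‖]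
  have hcf : ∀ m (F : Finset ℤ), ∑ j ∈ F, (|j| : ℝ) * ‖c m j‖ ^ 2 ≤ C :=
    fun m F => le_trans (Summable.sum_le_tsum F (fun j _ => by positivity) (hsummable m)) (htsum_le m)
  have habs1 : ∀ {j : ℤ}, j ≠ 0 → (1 : ℝ) ≤ (|j| : ℝ) := by
    intro j hj
    have h1 : (1:ℤ) ≤ |j| := Int.one_le_abs (by exact_mod_cast hj)
    exact_mod_cast h1
  have hcsq : ∀ m j, ‖c m j‖ ^ 2 ≤ C := by
    intro m j
    by_cases hj : j = 0
    · subst hj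
      nlinarith [hC m, htsumnn m]
    · have h1 := habs1 hj
      have h2 : (|j| : ℝ) * ‖c m j‖ ^ 2 ≤ C := by
        have := hcf m {j}
        simpa using this
      nlinarith [sq_nonneg ‖c m j‖]
  have hcb : ∀ m j, ‖c m j‖ ≤ Real.sqrt C := by
    intro m j
    have := Real.sqrt_le_sqrt (hcsq m j)
    rwa [Real.sqrt_sq (norm_nonneg _)] at this
  -- extract a coefficient-wise convergent subsequence
  set K : Set (ℤ → ℂ) := Set.pi Set.univ fun _ : ℤ => Metric.closedBall (0 : ℂ) (Real.sqrt C)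
    with hKdef
  have hK : IsCompact K := isCompact_univ_pi fun _ => isCompact_closedBall _ _
  have hmem : ∀ m, c m ∈ K := by
    intro m
    rw [hKdef, Set.mem_univ_pi]
    intro j
    rw [Metric.mem_closedBall, dist_zero_right]
    exact hcb m j
  obtain ⟨b, hbK, ψ, hψ, hconv⟩ := hK.tendsto_subseq hmem
  have hbj : ∀ j, Tendsto (fun i => c (ψ i) j) atTop (nhds (b j)) :=
    fun j => (tendsto_pi_nhds.1 hconv) j
  have hb0 : ∀ j, ‖b j‖ ≤ Real.sqrt C := by
    intro j
    rw [hKdef, Set.mem_univ_pi] at hbK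
    have := hbK j
    rwa [Metric.mem_closedBall, dist_zero_right] at this
  have hbsq : ∀ j, ‖b j‖ ^ 2 ≤ C := by
    intro j
    have := pow_le_pow_left₀ (norm_nonneg _) (hb0 j) 2
    rwa [Real.sq_sqrt hC0] at this
  have hbF : ∀ F : Finset ℤ, ∑ j ∈ F, (|j| : ℝ) * ‖b j‖ ^ 2 ≤ C := by
    intro F
    have htend : Tendsto (fun i => ∑ j ∈ F, (|j| : ℝ) * ‖c (ψ i) j‖ ^ 2) atTop
        (nhds (∑ j ∈ F, (|j| : ℝ) * ‖b j‖ ^ 2)) :=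
      tendsto_finset_sum _ fun j _ => ((hbj j).norm.pow 2).const_mul _
    exact le_of_tendsto htend (Eventually.of_forall fun i => hcf (ψ i) F)
  -- b is square-summable; build g from it
  have hb2 : Memℓp b 2 := by
    refine memℓp_gen' (C := C + C) ?_
    intro F
    have h1 : ∑ j ∈ F, ‖b j‖ ^ ((2 : ℝ≥0∞)).toReal = ∑ j ∈ F, ‖b j‖ ^ 2 :=
      Finset.sum_congr rfl fun j _ => by
        rw [show ((2:ℝ≥0∞)).toReal = (2:ℝ) by simp, Real.rpow_two]
    rw [h1]
    have hterm : ∀ (G : Finset ℤ), (∀ j ∈ G, j ≠ 0) → ∑ j ∈ G, ‖b j‖ ^ 2 ≤ C := by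
      intro G hG
      refine le_trans (Finset.sum_le_sum fun j hj => ?_) (hbF G)
      have := habs1 (hG j hj)
      nlinarith [sq_nonneg ‖b j‖]
    by_cases h0 : (0:ℤ) ∈ F
    · have hsplit : ∑ j ∈ F.erase 0, ‖b j‖ ^ 2 + ‖b 0‖ ^ 2 = ∑ j ∈ F, ‖b j‖ ^ 2 :=
        Finset.sum_erase_add F _ h0
      have h2 := hterm (F.erase 0) fun j hj => Finset.ne_of_mem_erase hj
      nlinarith [hbsq 0]
    · have h2 := hterm F fun j hj => fun h => h0 (h ▸ hj)
      linarith
  set g₀ : Lp ℂ 2 (haarAddCircle : Measure (AddCircle τ)) :=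
    (fourierBasis (T := τ)).repr.symm ⟨b, hb2⟩ with hg₀
  set g : AddCircle τ → ℂ := ⇑g₀ with hgdef
  have hgcoeff : ∀ j, fourierCoeff g j = b j := by
    intro j
    calc fourierCoeff g j = fourierBasis.repr g₀ j := (fourierBasis_repr g₀ j).symm
      _ = b j := by
          rw [hg₀, LinearIsometryEquiv.apply_symm_apply]
  have hgL2 : MemLp g 2 volume := memLp_volume_of_haar τ (Lp.memLp g₀)
  -- parameters
  set r : ℝ := max s 2 with hrdef
  have hr2 : 2 ≤ r := le_max_right _ _
  have hsr : s ≤ r := le_max_left _ _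
  have hs0 : 0 < s := lt_of_lt_of_le one_pos hs
  set R : ℝ≥0∞ := ENNReal.ofReal r with hRdef
  have hR1 : 1 ≤ R := by
    rw [hRdef, ← ENNReal.ofReal_one]
    exact ENNReal.ofReal_le_ofReal (by linarith)
  set D : ℝ := 2 * C + 2 * C with hDdef
  have hD0 : 0 ≤ D := by rw [hDdef]; linarith
  have hdmem : ∀ m, MemLp (f m - g) 2 volume := fun m => (hL2 m).sub hgL2
  have hdc : ∀ m j, fourierCoeff (f m - g) j = c m j - b j := by
    intro m j
    rw [fourierCoeff_sub τ (hL2 m) hgL2 j, hgcoeff j]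
  have hdD : ∀ m (F : Finset ℤ), ∑ j ∈ F, (|j| : ℝ) * ‖fourierCoeff (f m - g) j‖ ^ 2 ≤ D := by
    intro m F
    have h1 : ∀ j ∈ F, (|j| : ℝ) * ‖fourierCoeff (f m - g) j‖ ^ 2
        ≤ 2 * ((|j| : ℝ) * ‖c m j‖ ^ 2) + 2 * ((|j| : ℝ) * ‖b j‖ ^ 2) := by
      intro j _
      have habs : (0:ℝ) ≤ (|j| : ℝ) := by positivity
      have hsq : ‖fourierCoeff (f m - g) j‖ ^ 2 ≤ 2 * ‖c m j‖ ^ 2 + 2 * ‖b j‖ ^ 2 := by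
        rw [hdc m j]
        have h := norm_sub_le (c m j) (b j)
        nlinarith [norm_nonneg (c m j), norm_nonneg (b j), norm_nonneg (c m j - b j),
          sq_nonneg (‖c m j‖ - ‖b j‖)]
      nlinarith
    calc ∑ j ∈ F, (|j| : ℝ) * ‖fourierCoeff (f m - g) j‖ ^ 2
        ≤ ∑ j ∈ F, (2 * ((|j| : ℝ) * ‖c m j‖ ^ 2) + 2 * ((|j| : ℝ) * ‖b j‖ ^ 2)) :=
          Finset.sum_le_sum h1
      _ = 2 * (∑ j ∈ F, (|j| : ℝ) * ‖c m j‖ ^ 2) + 2 * (∑ j ∈ F, (|j| : ℝ) * ‖b j‖ ^ 2) := by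
          rw [Finset.sum_add_distrib, ← Finset.mul_sum, ← Finset.mul_sum]
      _ ≤ D := by
          have := hcf m F
          have := hbF F
          rw [hDdef]
          linarith
  have hgR : MemLp g R volume := by
    rw [hRdef]
    refine memLp_R τ r hr2 g hgL2 (D := C) ?_
    intro F
    refine le_trans (le_of_eq (Finset.sum_congr rfl fun j _ => by rw [hgcoeff j])) (hbF F)
  -- convergence in the L^r norm
  have key : Tendsto (fun m => eLpNorm (f (ψ m) - g) R volume) atTop (nhds 0) := by
    rw [ENNReal.tendsto_nhds_zero]
    intro ε hε
    have hε2 : (0:ℝ≥0∞) < ε / 2 := ENNReal.half_pos hε.ne'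
    obtain ⟨n, hn⟩ : ∃ n, Ψ τ r D n ≤ ε / 2 := by
      have hΨ := Ψ_tendsto_zero τ r D hτ.out.le hD0 hr2
      exact ((ENNReal.tendsto_nhds_zero.1 hΨ) (ε / 2) hε2).exists
    have hsmall : Tendsto (fun m => eLpNorm (S τ (fourierCoeff (f (ψ m) - g)) n) R volume)
        atTop (nhds 0) := by
      set t : ℕ → ℝ := fun m => ∑ j ∈ Fn n, ‖c (ψ m) j - b j‖ with ht
      have htt : Tendsto t atTop (nhds 0) := by
        have h2 : Tendsto t atTop (nhds (∑ j ∈ Fn n, ‖b j - b j‖)) :=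
          tendsto_finset_sum _ fun j _ => ((hbj j).sub tendsto_const_nhds).norm
        simpa using h2
      have hb1 : ∀ m, eLpNorm (S τ (fourierCoeff (f (ψ m) - g)) n) R volume
          ≤ ((volume : Measure (AddCircle τ)) Set.univ) ^ (R.toReal)⁻¹ * ENNReal.ofReal (t m) := by
        intro m
        refine eLpNorm_le_of_ae_bound (ae_of_all _ fun x => ?_)
        refine le_trans (trig_pointwise_bound τ _ (Fn n) x) ?_
        exact le_of_eq (Finset.sum_congr rfl fun j _ => by rw [hdc (ψ m) j])
      have h1 : Tendsto (fun m => ENNReal.ofReal (t m)) atTop (nhds 0) := by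
        rw [← ENNReal.ofReal_zero]
        exact ENNReal.tendsto_ofReal htt
      have hup := ENNReal.Tendsto.const_mul
        (a := ((volume : Measure (AddCircle τ)) Set.univ) ^ (R.toReal)⁻¹) h1
        (Or.inr (ENNReal.rpow_ne_top_of_nonneg (by positivity) (measure_ne_top _ _)))
      rw [mul_zero] at hup
      exact tendsto_of_tendsto_of_tendsto_of_le_of_le tendsto_const_nhds hup
        (fun m => zero_le) hb1
    have hev := (ENNReal.tendsto_nhds_zero.1 hsmall) (ε / 2) hε2
    filter_upwards [hev] with m hm
    have hsplit : f (ψ m) - g = (f (ψ m) - g - S τ (fourierCoeff (f (ψ m) - g)) n)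
        + S τ (fourierCoeff (f (ψ m) - g)) n := (sub_add_cancel _ _).symm
    calc eLpNorm (f (ψ m) - g) R volume
        = eLpNorm ((f (ψ m) - g - S τ (fourierCoeff (f (ψ m) - g)) n)
            + S τ (fourierCoeff (f (ψ m) - g)) n) R volume := by rw [← hsplit]
      _ ≤ eLpNorm (f (ψ m) - g - S τ (fourierCoeff (f (ψ m) - g)) n) R volume
            + eLpNorm (S τ (fourierCoeff (f (ψ m) - g)) n) R volume :=
          eLpNorm_add_le
            ((hdmem (ψ m)).aestronglyMeasurable.sub (S_cont τ _ n).aestronglyMeasurable)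
            (S_cont τ _ n).aestronglyMeasurable hR1
      _ ≤ ε / 2 + ε / 2 := by
          refine add_le_add (le_trans ?_ hn) hm
          rw [hRdef]
          exact tail_est τ r hr2 _ (hdmem (ψ m)) (hdD (ψ m)) n
      _ = ε := ENNReal.add_halves ε
  -- pass from exponent r to exponent s
  have hps : (ENNReal.ofReal s) ≤ R := by
    rw [hRdef]
    exact ENNReal.ofReal_le_ofReal hsr
  have hκ : ((volume : Measure (AddCircle τ)) Set.univ)
      ^ (1 / (ENNReal.ofReal s).toReal - 1 / R.toReal) ≠ ∞ := by
    refine ENNReal.rpow_ne_top_of_nonneg ?_ (measure_ne_top _ _)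
    rw [ENNReal.toReal_ofReal hs0.le, hRdef, ENNReal.toReal_ofReal (by linarith)]
    have h2 : 1 / r ≤ 1 / s := one_div_le_one_div_of_le hs0 hsr
    linarith
  refine ⟨g, ψ, hψ, hgR.mono_exponent hps, ?_⟩
  have hb2' : ∀ m, eLpNorm (f (ψ m) - g) (ENNReal.ofReal s) volume
      ≤ eLpNorm (f (ψ m) - g) R volume
        * ((volume : Measure (AddCircle τ)) Set.univ)
          ^ (1 / (ENNReal.ofReal s).toReal - 1 / R.toReal) :=
    fun m => eLpNorm_le_eLpNorm_mul_rpow_measure_univ hps (hdmem (ψ m)).aestronglyMeasurable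
  have hup := ENNReal.Tendsto.mul_const key (Or.inr hκ)
  rw [zero_mul] at hup
  exact tendsto_of_tendsto_of_tendsto_of_le_of_le tendsto_const_nhds hup
    (fun m => zero_le) hb2'
end
end
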